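/- arXiv:1212.1695 — 8 statements merged into one kernel-verified Lean document; each statement's English description precedes it below -/
import Mathlib

section
/- (Reverse triangle inequality, Lemma 1.) Let 0 < p̲ ≤ p(x) ≤ p̄ < 1 and let f, g ∈ L_{p(x),ω}(Ω) with 0 < ‖f‖_{p,ω,Ω} < ∞ and 0 < ‖g‖_{p,ω,Ω} < ∞. Then ‖ |f| + |g| ‖_{p,ω,Ω} ≥ ‖f‖_{p,ω,Ω} + ‖g‖_{p,ω,Ω}. -/
open MeasureTheory ENNReal Set Filter

/-- The modular `I_{p,ω}(f) = ∫_Ω (|f(x)| ω(x))^{p(x)} dx` (valued in `[0,∞]`). -/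
noncomputable def Ipw {n : ℕ} (Ω : Set (Fin n → ℝ)) (p ω : (Fin n → ℝ) → ℝ)
    (f : (Fin n → ℝ) → ℝ) : ℝ≥0∞ :=
  ∫⁻ x in Ω, ENNReal.ofReal (|f x| * ω x) ^ p x

/-- The quasi-norm `‖f‖_{p,ω,Ω} = inf {λ > 0 : ∫_Ω (|f(x)| ω(x)/λ)^{p(x)} dx ≤ 1}`. -/
noncomputable def Npw {n : ℕ} (Ω : Set (Fin n → ℝ)) (p ω : (Fin n → ℝ) → ℝ)
    (f : (Fin n → ℝ) → ℝ) : ℝ≥0∞ :=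
  sInf {lam : ℝ≥0∞ | 0 < lam ∧
    ∫⁻ x in Ω, (ENNReal.ofReal (|f x| * ω x) / lam) ^ p x ≤ 1}

/-- Two-point concavity of `t ↦ t^q` on `ℝ≥0∞` for `0 < q ≤ 1`. -/
lemma concave2 (w₁ w₂ u v : ℝ≥0∞) (hw : w₁ + w₂ = 1) {q : ℝ} (h0 : 0 < q) (h1 : q ≤ 1) :
    w₁ * u ^ q + w₂ * v ^ q ≤ (w₁ * u + w₂ * v) ^ q := by
  have hq1 : (1 : ℝ) ≤ 1 / q := (le_div_iff₀ h0).mpr (by linarith)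
  have h := ENNReal.rpow_arith_mean_le_arith_mean2_rpow w₁ w₂ (u ^ q) (v ^ q) hw hq1
  rw [← ENNReal.rpow_mul u, ← ENNReal.rpow_mul v, mul_one_div_cancel h0.ne', ENNReal.rpow_one,
    ENNReal.rpow_one] at h
  calc w₁ * u ^ q + w₂ * v ^ q
      = ((w₁ * u ^ q + w₂ * v ^ q) ^ (1 / q)) ^ q := by
        rw [← ENNReal.rpow_mul, one_div_mul_cancel h0.ne', ENNReal.rpow_one]
    _ ≤ (w₁ * u + w₂ * v) ^ q := ENNReal.rpow_le_rpow h h0.le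

/-- Reverse triangle inequality (Lemma 1):
`‖|f| + |g|‖_{p,ω,Ω} ≥ ‖f‖_{p,ω,Ω} + ‖g‖_{p,ω,Ω}` for `0 < p(x) < 1`. -/
theorem reverse_triangle_inequality
    {n : ℕ} (Ω : Set (Fin n → ℝ)) (hΩ : MeasurableSet Ω)
    (p ω : (Fin n → ℝ) → ℝ) (hp : Measurable p) (hω : Measurable ω)
    (hpl : 0 < essInf p (volume.restrict Ω))
    (hpu : essSup p (volume.restrict Ω) < 1)
    (hpb : ∀ᵐ x ∂(volume.restrict Ω),
      essInf p (volume.restrict Ω) ≤ p x ∧ p x ≤ essSup p (volume.restrict Ω))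
    (hωpos : ∀ᵐ x ∂(volume.restrict Ω), 0 < ω x)
    (f g : (Fin n → ℝ) → ℝ) (hf : Measurable f) (hg : Measurable g)
    (hfL : Ipw Ω p ω f < ∞) (hgL : Ipw Ω p ω g < ∞)
    (hf0 : 0 < Npw Ω p ω f) (hf1 : Npw Ω p ω f < ∞)
    (hg0 : 0 < Npw Ω p ω g) (hg1 : Npw Ω p ω g < ∞) :
    Npw Ω p ω f + Npw Ω p ω g ≤ Npw Ω p ω (fun x => |f x| + |g x|) := by
  set F := Npw Ω p ω f with hF
  set G := Npw Ω p ω g with hG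
  -- abbreviations
  set a : (Fin n → ℝ) → ℝ≥0∞ := fun x => ENNReal.ofReal (|f x| * ω x) with ha
  set b : (Fin n → ℝ) → ℝ≥0∞ := fun x => ENNReal.ofReal (|g x| * ω x) with hb
  have hameas : Measurable a := (hf.abs.mul hω).ennreal_ofReal
  have hbmeas : Measurable b := (hg.abs.mul hω).ennreal_ofReal
  rw [Npw]
  refine le_sInf fun lam hlam => ?_
  obtain ⟨hlam0, hlamI⟩ := hlam
  by_cases hlamtop : lam = ∞
  · exact hlamtop ▸ le_top
  by_contra hcon
  push_neg at hcon
  -- pick λf < F, λg < G with λf + λg = lam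
  have hFG0 : F + G ≠ 0 := by
    rw [ne_eq, add_eq_zero]
    exact fun h => hf0.ne' h.1
  have hFGtop : F + G ≠ ∞ := by
    simp [ENNReal.add_ne_top, hf1.ne, hg1.ne]
  set t : ℝ≥0∞ := lam / (F + G) with htdef
  have ht1 : t < 1 :=
    (ENNReal.div_lt_iff (Or.inl hFG0) (Or.inl hFGtop)).mpr (by rwa [one_mul])
  have ht0 : t ≠ 0 := by
    rw [htdef, ne_eq, ENNReal.div_eq_zero_iff]
    push_neg
    exact ⟨hlam0.ne', hFGtop⟩
  set lf : ℝ≥0∞ := t * F with hlf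
  set lg : ℝ≥0∞ := t * G with hlg
  have hlfF : lf < F := by
    calc lf < 1 * F := ENNReal.mul_lt_mul_left hf0.ne' hf1.ne ht1
    _ = F := one_mul F
  have hlgG : lg < G := by
    calc lg < 1 * G := ENNReal.mul_lt_mul_left hg0.ne' hg1.ne ht1
    _ = G := one_mul G
  have hsum : lf + lg = lam := by
    rw [hlf, hlg, ← mul_add, htdef, ENNReal.div_mul_cancel hFG0 hFGtop]
  have hlf0 : lf ≠ 0 := mul_ne_zero ht0 hf0.ne'
  have hlg0 : lg ≠ 0 := mul_ne_zero ht0 hg0.ne'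
  have hlftop : lf ≠ ∞ := (hlfF.trans hf1).ne
  have hlgtop : lg ≠ ∞ := (hlgG.trans hg1).ne
  -- lf is not in the defining set of F, so its modular exceeds 1
  have hIf : 1 < ∫⁻ x in Ω, (a x / lf) ^ p x := by
    by_contra h
    push_neg at h
    have hmem : lf ∈ {lam : ℝ≥0∞ | 0 < lam ∧
        ∫⁻ x in Ω, (ENNReal.ofReal (|f x| * ω x) / lam) ^ p x ≤ 1} :=
      ⟨zero_lt_iff.mpr hlf0, h⟩
    exact absurd (sInf_le hmem) (not_le.mpr hlfF)
  have hIg : 1 < ∫⁻ x in Ω, (b x / lg) ^ p x := by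
    by_contra h
    push_neg at h
    have hmem : lg ∈ {lam : ℝ≥0∞ | 0 < lam ∧
        ∫⁻ x in Ω, (ENNReal.ofReal (|g x| * ω x) / lam) ^ p x ≤ 1} :=
      ⟨zero_lt_iff.mpr hlg0, h⟩
    exact absurd (sInf_le hmem) (not_le.mpr hlgG)
  -- weights
  set w₁ : ℝ≥0∞ := lf / lam with hw1
  set w₂ : ℝ≥0∞ := lg / lam with hw2
  have hw : w₁ + w₂ = 1 := by
    rw [hw1, hw2, ENNReal.div_add_div_same, hsum, ENNReal.div_self hlam0.ne' hlamtop]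
  have hw10 : w₁ ≠ 0 := by
    rw [hw1, ne_eq, ENNReal.div_eq_zero_iff]; push_neg; exact ⟨hlf0, hlamtop⟩
  have hw1top : w₁ ≠ ∞ := (ENNReal.div_lt_top hlftop hlam0.ne').ne
  have hw20 : w₂ ≠ 0 := by
    rw [hw2, ne_eq, ENNReal.div_eq_zero_iff]; push_neg; exact ⟨hlg0, hlamtop⟩
  have hw2top : w₂ ≠ ∞ := (ENNReal.div_lt_top hlgtop hlam0.ne').ne
  -- pointwise a.e. concavity inequality
  have hptwise : ∀ᵐ x ∂(volume.restrict Ω),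
      w₁ * (a x / lf) ^ p x + w₂ * (b x / lg) ^ p x
        ≤ (ENNReal.ofReal (|(fun x => |f x| + |g x|) x| * ω x) / lam) ^ p x := by
    filter_upwards [hpb, hωpos] with x ⟨hx1, hx2⟩ hωx
    have hq0 : 0 < p x := lt_of_lt_of_le hpl hx1
    have hq1 : p x ≤ 1 := le_of_lt (lt_of_le_of_lt hx2 hpu)
    have key := concave2 w₁ w₂ (a x / lf) (b x / lg) hw hq0 hq1
    have h1 : w₁ * (a x / lf) = a x / lam := by
      rw [hw1, div_eq_mul_inv, div_eq_mul_inv, div_eq_mul_inv]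
      calc lf * lam⁻¹ * (a x * lf⁻¹) = a x * lam⁻¹ * (lf * lf⁻¹) := by ring
      _ = a x * lam⁻¹ := by rw [ENNReal.mul_inv_cancel hlf0 hlftop, mul_one]
    have h2 : w₂ * (b x / lg) = b x / lam := by
      rw [hw2, div_eq_mul_inv, div_eq_mul_inv, div_eq_mul_inv]
      calc lg * lam⁻¹ * (b x * lg⁻¹) = b x * lam⁻¹ * (lg * lg⁻¹) := by ring
      _ = b x * lam⁻¹ := by rw [ENNReal.mul_inv_cancel hlg0 hlgtop, mul_one]
    have h3 : ENNReal.ofReal (|(fun x => |f x| + |g x|) x| * ω x) = a x + b x := by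
      simp only [ha, hb]
      rw [← ENNReal.ofReal_add (by positivity) (by positivity)]
      congr 1
      rw [abs_of_nonneg (by positivity), add_mul]
    rw [h1, h2, ENNReal.div_add_div_same] at key
    rw [h3]
    exact key
  -- integrate
  have hma : Measurable fun x => (a x / lf) ^ p x :=
    (hameas.div_const lf).pow hp
  have hmb : Measurable fun x => (b x / lg) ^ p x :=
    (hbmeas.div_const lg).pow hp
  have hint : w₁ * (∫⁻ x in Ω, (a x / lf) ^ p x) + w₂ * (∫⁻ x in Ω, (b x / lg) ^ p x)
      ≤ ∫⁻ x in Ω, (ENNReal.ofReal (|(fun x => |f x| + |g x|) x| * ω x) / lam) ^ p x := by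
    rw [← lintegral_const_mul w₁ hma, ← lintegral_const_mul w₂ hmb,
      ← lintegral_add_left (hma.const_mul w₁)]
    exact lintegral_mono_ae hptwise
  have hstrict : (1 : ℝ≥0∞) < w₁ * (∫⁻ x in Ω, (a x / lf) ^ p x)
      + w₂ * (∫⁻ x in Ω, (b x / lg) ^ p x) := by
    calc (1 : ℝ≥0∞) = w₁ * 1 + w₂ * 1 := by rw [mul_one, mul_one, hw]
    _ < w₁ * (∫⁻ x in Ω, (a x / lf) ^ p x) + w₂ * (∫⁻ x in Ω, (b x / lg) ^ p x) :=
        ENNReal.add_lt_add (ENNReal.mul_lt_mul_right hw10 hw1top hIf)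
          (ENNReal.mul_lt_mul_right hw20 hw2top hIg)
  exact absurd (lt_of_lt_of_le (lt_of_lt_of_le hstrict hint) hlamI) (lt_irrefl 1)
end

section
/- (Non-local-convexity computation, Lemma 4.) Let ε > 0, m ≥ 1, and let A₁, …, A_m ⊆ Ω be pairwise disjoint measurable sets with 0 < ω(A_k) := ∫_{A_k} ω(x)^{p(x)} dx < ∞ for each k. Define f_k(x) = (ε/ω(A_k))^{1/p(x)} χ_{A_k}(x) and g_m = (1/m) ∑_{k=1}^m f_k. Then I_{p,ω}(f_k) = ε for every k = 1, …, m, while I_{p,ω}(g_m) ≥ m^{1 − p̄} ε. -/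
open MeasureTheory ENNReal Set Filter

lemma ptwise {c w q : ℝ} (hc : 0 < c) (hw : 0 ≤ w) (hq : 0 < q) :
    ENNReal.ofReal (c ^ (1 / q) * w) ^ q = ENNReal.ofReal c * ENNReal.ofReal (w ^ q) := by
  rw [ENNReal.ofReal_rpow_of_nonneg (mul_nonneg (Real.rpow_nonneg hc.le _) hw) hq.le,
      Real.mul_rpow (Real.rpow_nonneg hc.le _) hw, ← Real.rpow_mul hc.le,
      one_div, inv_mul_cancel₀ hq.ne', Real.rpow_one, ENNReal.ofReal_mul hc.le]

lemma ptwise2 {d c w q : ℝ} (hd : 0 < d) (hc : 0 < c) (hw : 0 ≤ w) (hq : 0 < q) :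
    ENNReal.ofReal (d * c ^ (1 / q) * w) ^ q =
      ENNReal.ofReal (d ^ q) * (ENNReal.ofReal c * ENNReal.ofReal (w ^ q)) := by
  have h : d * c ^ (1 / q) = (d ^ q * c) ^ (1 / q) := by
    rw [Real.mul_rpow (Real.rpow_nonneg hd.le _) hc.le, ← Real.rpow_mul hd.le,
      mul_one_div, div_self hq.ne', Real.rpow_one]
  rw [h, ptwise (by positivity) hw hq, ENNReal.ofReal_mul (by positivity), mul_assoc]

/-- Non-local-convexity computation (Lemma 4): for disjoint sets `A₁,…,A_m` and
`f_k = (ε/ω(A_k))^{1/p(x)} χ_{A_k}`, one has `I_{p,ω}(f_k) = ε` while the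
average `g_m = (1/m) ∑ f_k` satisfies `I_{p,ω}(g_m) ≥ m^{1-p̄} ε`. -/
theorem not_locally_convex_computation
    {n : ℕ} (Ω : Set (Fin n → ℝ)) (hΩ : MeasurableSet Ω)
    (p ω : (Fin n → ℝ) → ℝ) (hp : Measurable p) (hω : Measurable ω)
    (hpl : 0 < essInf p (volume.restrict Ω))
    (hpu : essSup p (volume.restrict Ω) < 1)
    (hpb : ∀ᵐ x ∂(volume.restrict Ω),
      essInf p (volume.restrict Ω) ≤ p x ∧ p x ≤ essSup p (volume.restrict Ω))
    (hωpos : ∀ᵐ x ∂(volume.restrict Ω), 0 < ω x)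
    (m : ℕ) (hm : 1 ≤ m) (ε : ℝ) (hε : 0 < ε)
    (A : Fin m → Set (Fin n → ℝ))
    (hAmeas : ∀ k, MeasurableSet (A k)) (hAsub : ∀ k, A k ⊆ Ω)
    (hAdisj : Pairwise (Function.onFun Disjoint A))
    (ωA : Fin m → ℝ) (hωApos : ∀ k, 0 < ωA k)
    (hωA : ∀ k, ENNReal.ofReal (ωA k) = ∫⁻ x in A k, ENNReal.ofReal (ω x ^ p x)) :
    (∀ k, Ipw Ω p ω
        (fun x => Set.indicator (A k) (fun y => (ε / ωA k) ^ (1 / p y)) x) =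
      ENNReal.ofReal ε) ∧
    ENNReal.ofReal ((m : ℝ) ^ ((1 : ℝ) - essSup p (volume.restrict Ω)) * ε) ≤
      Ipw Ω p ω (fun x => (1 / (m : ℝ)) *
        ∑ k : Fin m, Set.indicator (A k) (fun y => (ε / ωA k) ^ (1 / p y)) x) := by
  set Q := essSup p (volume.restrict Ω) with hQdef
  have hppos : ∀ᵐ x ∂(volume.restrict Ω), 0 < p x ∧ p x ≤ Q ∧ 0 < ω x := by
    filter_upwards [hpb, hωpos] with x hx hωx
    exact ⟨hpl.trans_le hx.1, hx.2, hωx⟩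
  have hm0 : (0 : ℝ) < (m : ℝ) := by exact_mod_cast hm
  have hc : ∀ k, 0 < ε / ωA k := fun k => div_pos hε (hωApos k)
  have hεk : ∀ k, ENNReal.ofReal (ε / ωA k) * ENNReal.ofReal (ωA k) = ENNReal.ofReal ε := by
    intro k
    rw [← ENNReal.ofReal_mul (hc k).le, div_mul_cancel₀ _ (hωApos k).ne']
  -- Part 1
  have part1 : ∀ k, Ipw Ω p ω
      (fun x => Set.indicator (A k) (fun y => (ε / ωA k) ^ (1 / p y)) x) =
      ENNReal.ofReal ε := by
    intro k
    have h1 : Ipw Ω p ω (fun x => Set.indicator (A k) (fun y => (ε / ωA k) ^ (1 / p y)) x)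
        = ∫⁻ x in Ω, (A k).indicator
            (fun y => ENNReal.ofReal (ε / ωA k) * ENNReal.ofReal (ω y ^ p y)) x := by
      refine lintegral_congr_ae ?_
      filter_upwards [hppos] with x hx
      by_cases hxA : x ∈ A k
      · rw [Set.indicator_of_mem hxA, Set.indicator_of_mem hxA,
          abs_of_nonneg (Real.rpow_nonneg (hc k).le _), ptwise (hc k) hx.2.2.le hx.1]
      · rw [Set.indicator_of_notMem hxA, Set.indicator_of_notMem hxA]
        simp [ENNReal.zero_rpow_of_pos hx.1]
    rw [h1, lintegral_indicator (hAmeas k), Measure.restrict_restrict (hAmeas k),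
      Set.inter_eq_left.mpr (hAsub k),
      lintegral_const_mul' _ _ ENNReal.ofReal_ne_top, ← hωA k, hεk k]
  refine ⟨part1, ?_⟩
  -- Part 2
  set g : (Fin n → ℝ) → ℝ := fun x => (1 / (m : ℝ)) *
    ∑ k : Fin m, Set.indicator (A k) (fun y => (ε / ωA k) ^ (1 / p y)) x with hg
  have hsub : (⋃ k, A k) ⊆ Ω := Set.iUnion_subset hAsub
  have step1 : (∫⁻ x in ⋃ k, A k, ENNReal.ofReal (|g x| * ω x) ^ p x) ≤ Ipw Ω p ω g :=
    lintegral_mono' (Measure.restrict_mono hsub le_rfl) le_rfl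
  have step2 : (∫⁻ x in ⋃ k, A k, ENNReal.ofReal (|g x| * ω x) ^ p x)
      = ∑ k : Fin m, ∫⁻ x in A k, ENNReal.ofReal (|g x| * ω x) ^ p x := by
    rw [lintegral_iUnion hAmeas hAdisj, tsum_fintype]
  have step3 : ∀ k : Fin m, ENNReal.ofReal ((1 / (m : ℝ)) ^ Q) * ENNReal.ofReal ε
      ≤ ∫⁻ x in A k, ENNReal.ofReal (|g x| * ω x) ^ p x := by
    intro k
    have hae : ∀ᵐ x ∂(volume.restrict (A k)),
        ENNReal.ofReal ((1 / (m : ℝ)) ^ Q) *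
          (ENNReal.ofReal (ε / ωA k) * ENNReal.ofReal (ω x ^ p x))
        ≤ ENNReal.ofReal (|g x| * ω x) ^ p x := by
      filter_upwards [ae_restrict_of_ae_restrict_of_subset (hAsub k) hppos,
        ae_restrict_mem (hAmeas k)] with x hx hxA
      have hsum : ∑ j : Fin m, Set.indicator (A j) (fun y => (ε / ωA j) ^ (1 / p y)) x
          = (ε / ωA k) ^ (1 / p x) := by
        rw [Finset.sum_eq_single_of_mem k (Finset.mem_univ k)]
        · exact Set.indicator_of_mem hxA _
        · intro j _ hj
          exact Set.indicator_of_notMem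
            (fun hxj => Set.disjoint_left.mp (hAdisj hj) hxj hxA) _
      have hgx : g x = (1 / (m : ℝ)) * (ε / ωA k) ^ (1 / p x) := by
        rw [hg]; simp only; rw [hsum]
      rw [hgx, abs_of_nonneg (mul_nonneg (by positivity) (Real.rpow_nonneg (hc k).le _)),
        ptwise2 (one_div_pos.mpr hm0) (hc k) hx.2.2.le hx.1]
      refine mul_le_mul_left (ENNReal.ofReal_le_ofReal ?_) _
      exact Real.rpow_le_rpow_of_exponent_ge (one_div_pos.mpr hm0)
        (by rw [one_div]; exact inv_le_one_of_one_le₀ (by exact_mod_cast hm)) hx.2.1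
    calc ENNReal.ofReal ((1 / (m : ℝ)) ^ Q) * ENNReal.ofReal ε
        = ∫⁻ x in A k, ENNReal.ofReal ((1 / (m : ℝ)) ^ Q) *
            (ENNReal.ofReal (ε / ωA k) * ENNReal.ofReal (ω x ^ p x)) := by
          rw [lintegral_const_mul' _ _ ENNReal.ofReal_ne_top,
            lintegral_const_mul' _ _ ENNReal.ofReal_ne_top, ← hωA k, hεk k]
      _ ≤ _ := lintegral_mono_ae hae
  have hreal : (m : ℝ) ^ ((1 : ℝ) - Q) * ε = (m : ℝ) * ((1 / (m : ℝ)) ^ Q * ε) := by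
    rw [one_div, Real.inv_rpow hm0.le, Real.rpow_sub hm0, Real.rpow_one]
    ring
  calc ENNReal.ofReal ((m : ℝ) ^ ((1 : ℝ) - Q) * ε)
      = ∑ _k : Fin m, ENNReal.ofReal ((1 / (m : ℝ)) ^ Q) * ENNReal.ofReal ε := by
        rw [hreal, ENNReal.ofReal_mul hm0.le, ENNReal.ofReal_mul (by positivity),
          Finset.sum_const, Finset.card_univ, Fintype.card_fin, nsmul_eq_mul,
          ENNReal.ofReal_natCast]
    _ ≤ ∑ k : Fin m, ∫⁻ x in A k, ENNReal.ofReal (|g x| * ω x) ^ p x :=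
        Finset.sum_le_sum fun k _ => step3 k
    _ = _ := step2.symm
    _ ≤ _ := step1
end

section
/- (Completeness, Theorem 5.) Let (f_n)_{n ≥ 1} be a sequence in L_{p(x),ω}(Ω) such that I_{p,ω}(f_n − f_m) → 0 as n, m → ∞. Then there exists f ∈ L_{p(x),ω}(Ω) such that I_{p,ω}(f_n − f) → 0 as n → ∞; i.e., the space L_{p(x),ω}(Ω) is complete with respect to the modular metric ρ(f, g) = I_{p,ω}(f − g). -/
open MeasureTheory ENNReal Set Filter

/-- Subadditivity of `t ↦ t^q` on `ℝ≥0∞` for countable sums, `0 < q ≤ 1`. -/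
lemma tsum_rpow_le_aux (a : ℕ → ℝ≥0∞) {q : ℝ} (h0 : 0 < q) (h1 : q ≤ 1) :
    (∑' j, a j) ^ q ≤ ∑' j, a j ^ q := by
  have hfin : ∀ N : ℕ, (∑ j ∈ Finset.range N, a j) ^ q ≤ ∑ j ∈ Finset.range N, a j ^ q := by
    intro N
    induction N with
    | zero => simp [ENNReal.zero_rpow_of_pos h0]
    | succ N ih =>
      rw [Finset.sum_range_succ, Finset.sum_range_succ]
      calc (∑ j ∈ Finset.range N, a j + a N) ^ q
          ≤ (∑ j ∈ Finset.range N, a j) ^ q + a N ^ q :=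
            ENNReal.rpow_add_le_add_rpow _ _ h0.le h1
        _ ≤ _ := add_le_add_left ih _
  have h2 : Tendsto (fun N => (∑ j ∈ Finset.range N, a j) ^ q) atTop
      (nhds ((∑' j, a j) ^ q)) :=
    (ENNReal.continuous_rpow_const.tendsto _).comp (ENNReal.tendsto_nat_tsum a)
  exact le_of_tendsto h2 (Eventually.of_forall fun N =>
    (hfin N).trans (ENNReal.sum_le_tsum _))

/-- Completeness (Theorem 5): `L_{p(x),ω}(Ω)` is complete with respect to the
modular metric `ρ(f,g) = I_{p,ω}(f - g)`. -/
theorem modular_complete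
    {n : ℕ} (Ω : Set (Fin n → ℝ)) (hΩ : MeasurableSet Ω)
    (p ω : (Fin n → ℝ) → ℝ) (hp : Measurable p) (hω : Measurable ω)
    (hpl : 0 < essInf p (volume.restrict Ω))
    (hpu : essSup p (volume.restrict Ω) < 1)
    (hpb : ∀ᵐ x ∂(volume.restrict Ω),
      essInf p (volume.restrict Ω) ≤ p x ∧ p x ≤ essSup p (volume.restrict Ω))
    (hωpos : ∀ᵐ x ∂(volume.restrict Ω), 0 < ω x)
    (F : ℕ → (Fin n → ℝ) → ℝ)
    (hF : ∀ k, Measurable (F k) ∧ Ipw Ω p ω (F k) < ∞)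
    (hcauchy : ∀ ε : ℝ≥0∞, 0 < ε → ∃ N : ℕ, ∀ k l : ℕ, N ≤ k → N ≤ l →
      Ipw Ω p ω (fun x => F k x - F l x) < ε) :
    ∃ f : (Fin n → ℝ) → ℝ, Measurable f ∧ Ipw Ω p ω f < ∞ ∧
      Tendsto (fun k => Ipw Ω p ω (fun x => F k x - f x)) atTop (nhds 0) := by
  classical
  set μ := volume.restrict Ω with hμdef
  have hI : ∀ g : (Fin n → ℝ) → ℝ,
      Ipw Ω p ω g = ∫⁻ x, ENNReal.ofReal (|g x| * ω x) ^ p x ∂μ := fun _ => rfl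
  -- a.e. bounds on p and ω
  have hae : ∀ᵐ x ∂μ, 0 < p x ∧ p x ≤ 1 ∧ 0 < ω x := by
    filter_upwards [hpb, hωpos] with x hx hωx
    exact ⟨hpl.trans_le hx.1, (hx.2.trans hpu.le), hωx⟩
  -- measurability of the integrand
  have meas : ∀ {g : (Fin n → ℝ) → ℝ}, Measurable g →
      Measurable fun x => ENNReal.ofReal (|g x| * ω x) ^ p x := fun hg =>
    ((hg.abs.mul hω).ennreal_ofReal).pow hp
  -- subadditivity of the modular
  have subadd : ∀ g h : (Fin n → ℝ) → ℝ, Measurable g → Measurable h →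
      Ipw Ω p ω (fun x => g x + h x) ≤ Ipw Ω p ω g + Ipw Ω p ω h := by
    intro g h hg hh
    have hpt : ∀ᵐ x ∂μ, ENNReal.ofReal (|g x + h x| * ω x) ^ p x ≤
        ENNReal.ofReal (|g x| * ω x) ^ p x + ENNReal.ofReal (|h x| * ω x) ^ p x := by
      filter_upwards [hae] with x hx
      obtain ⟨hp0, hp1, hω0⟩ := hx
      calc ENNReal.ofReal (|g x + h x| * ω x) ^ p x
          ≤ (ENNReal.ofReal (|g x| * ω x) + ENNReal.ofReal (|h x| * ω x)) ^ p x := by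
            rw [← ENNReal.ofReal_add (by positivity) (by positivity)]
            refine ENNReal.rpow_le_rpow (ENNReal.ofReal_le_ofReal ?_) hp0.le
            rw [← add_mul]
            exact mul_le_mul_of_nonneg_right (abs_add_le _ _) hω0.le
        _ ≤ _ := ENNReal.rpow_add_le_add_rpow _ _ hp0.le hp1
    calc Ipw Ω p ω (fun x => g x + h x)
        ≤ ∫⁻ x, (ENNReal.ofReal (|g x| * ω x) ^ p x
            + ENNReal.ofReal (|h x| * ω x) ^ p x) ∂μ := by
          rw [hI]; exact lintegral_mono_ae hpt
      _ = Ipw Ω p ω g + Ipw Ω p ω h := by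
          rw [hI, hI]; exact lintegral_add_left (meas hg) _
  -- choose a rapidly Cauchy subsequence
  have hcs : ∀ j : ℕ, ∃ N : ℕ, ∀ k l, N ≤ k → N ≤ l →
      Ipw Ω p ω (fun x => F k x - F l x) < 2⁻¹ ^ j := fun j =>
    hcauchy _ (ENNReal.pow_pos (ENNReal.inv_pos.mpr ENNReal.ofNat_ne_top) j)
  choose N hN using hcs
  let φ : ℕ → ℕ := fun j => Nat.rec (N 0) (fun j ih => max (ih + 1) (N (j + 1))) j
  have hφmono : StrictMono φ :=
    strictMono_nat_of_lt_succ fun j => lt_of_lt_of_le (Nat.lt_succ_self _) (le_max_left _ _)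
  have hφN : ∀ j, N j ≤ φ j := by
    intro j; cases j with
    | zero => exact le_rfl
    | succ j => exact le_max_right _ _
  have hd : ∀ j, Ipw Ω p ω (fun x => F (φ (j + 1)) x - F (φ j) x) < 2⁻¹ ^ j := fun j =>
    hN j _ _ ((hφN j).trans (hφmono (Nat.lt_succ_self j)).le) (hφN j)
  -- the sum of modulars of differences is finite
  have hsum : (∑' j : ℕ, Ipw Ω p ω (fun x => F (φ (j + 1)) x - F (φ j) x)) < ∞ := by
    calc (∑' j : ℕ, Ipw Ω p ω (fun x => F (φ (j + 1)) x - F (φ j) x))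
        ≤ ∑' j : ℕ, (2⁻¹ : ℝ≥0∞) ^ j := ENNReal.tsum_le_tsum fun j => (hd j).le
      _ = (1 - 2⁻¹)⁻¹ := ENNReal.tsum_geometric _
      _ < ∞ := by
          rw [ENNReal.inv_lt_top, pos_iff_ne_zero]
          intro h
          have h2 : (2⁻¹ : ℝ≥0∞) < 1 := ENNReal.inv_lt_one.mpr one_lt_two
          rw [tsub_eq_zero_iff_le] at h
          exact absurd h (not_le.mpr h2)
  -- pointwise a.e. the series of absolute differences converges
  set g : ℕ → (Fin n → ℝ) → ℝ≥0∞ :=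
    fun j x => ENNReal.ofReal (|F (φ (j + 1)) x - F (φ j) x|) with hg
  set W : (Fin n → ℝ) → ℝ≥0∞ := fun x => ENNReal.ofReal (ω x) with hW
  have hgmeas : ∀ j, Measurable (g j) := fun j =>
    (((hF (φ (j + 1))).1.sub (hF (φ j)).1).abs).ennreal_ofReal
  have hSint : (∫⁻ x, ((∑' j, g j x) * W x) ^ p x ∂μ) < ∞ := by
    have hpt : ∀ᵐ x ∂μ, ((∑' j, g j x) * W x) ^ p x ≤ ∑' j, (g j x * W x) ^ p x := by
      filter_upwards [hae] with x hx
      obtain ⟨hp0, hp1, _⟩ := hx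
      rw [← ENNReal.tsum_mul_right]
      exact tsum_rpow_le_aux _ hp0 hp1
    have heq : ∀ j x, (g j x * W x) ^ p x =
        ENNReal.ofReal (|F (φ (j + 1)) x - F (φ j) x| * ω x) ^ p x := by
      intro j x
      rw [hg, hW, ← ENNReal.ofReal_mul (abs_nonneg _)]
    calc (∫⁻ x, ((∑' j, g j x) * W x) ^ p x ∂μ)
        ≤ ∫⁻ x, ∑' j, (g j x * W x) ^ p x ∂μ := lintegral_mono_ae hpt
      _ = ∑' j, ∫⁻ x, (g j x * W x) ^ p x ∂μ :=
          lintegral_tsum fun j =>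
            (((hgmeas j).mul (hω.ennreal_ofReal)).pow hp).aemeasurable
      _ = ∑' j : ℕ, Ipw Ω p ω (fun x => F (φ (j + 1)) x - F (φ j) x) := by
          refine tsum_congr fun j => ?_
          rw [hI]
          exact lintegral_congr fun x => by rw [heq]
      _ < ∞ := hsum
  have hSmeas : Measurable fun x => ((∑' j, g j x) * W x) ^ p x :=
    (((Measurable.ennreal_tsum hgmeas).mul hω.ennreal_ofReal).pow hp)
  have hSfin : ∀ᵐ x ∂μ, ((∑' j, g j x) * W x) ^ p x < ∞ := ae_lt_top hSmeas hSint.ne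
  have hconv : ∀ᵐ x ∂μ, ∃ c : ℝ, Tendsto (fun j => F (φ j) x) atTop (nhds c) := by
    filter_upwards [hSfin, hae] with x hfx hx
    obtain ⟨hp0, _, hω0⟩ := hx
    -- first: ∑' j, g j x ≠ ∞
    have hSW : (∑' j, g j x) * W x ≠ ∞ := by
      intro h
      rw [h, ENNReal.top_rpow_of_pos hp0] at hfx
      exact absurd hfx (lt_irrefl _)
    have hWne : W x ≠ 0 := by
      simp only [hW, ne_eq, ENNReal.ofReal_eq_zero, not_le]
      exact hω0
    have hS : (∑' j, g j x) ≠ ∞ := by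
      intro h
      rw [h, ENNReal.top_mul hWne] at hSW
      exact hSW rfl
    have hsummable : Summable fun j => |F (φ (j + 1)) x - F (φ j) x| := by
      have := ENNReal.summable_toReal hS
      simpa only [hg, ENNReal.toReal_ofReal (abs_nonneg _)] using this
    have hsum2 : Summable fun j => F (φ (j + 1)) x - F (φ j) x := hsummable.of_abs
    refine ⟨(∑' j, (F (φ (j + 1)) x - F (φ j) x)) + F (φ 0) x, ?_⟩
    have h1 := hsum2.hasSum.tendsto_sum_nat
    have h2 : ∀ N_1 : ℕ, (∑ j ∈ Finset.range N_1, (F (φ (j + 1)) x - F (φ j) x))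
        = F (φ N_1) x - F (φ 0) x := fun N_1 =>
      Finset.sum_range_sub (fun j => F (φ j) x) N_1
    have h3 : Tendsto (fun N_1 => F (φ N_1) x - F (φ 0) x) atTop
        (nhds (∑' j, (F (φ (j + 1)) x - F (φ j) x))) := by
      simpa only [h2] using h1
    have h4 := h3.add_const (F (φ 0) x)
    simpa using h4
  -- extract the measurable a.e. limit
  obtain ⟨f, hfmeas, hftendsto⟩ :=
    measurable_limit_of_tendsto_metrizable_ae (μ := μ)
      (fun j => ((hF (φ j)).1).aemeasurable) hconv
  -- Fatou: modular of the limit is controlled by liminf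
  have fatou : ∀ m, Ipw Ω p ω (fun x => F m x - f x) ≤
      liminf (fun j => Ipw Ω p ω (fun x => F m x - F (φ j) x)) atTop := by
    intro m
    have hpt : ∀ᵐ x ∂μ, ENNReal.ofReal (|F m x - f x| * ω x) ^ p x =
        liminf (fun j => ENNReal.ofReal (|F m x - F (φ j) x| * ω x) ^ p x) atTop := by
      filter_upwards [hftendsto] with x hx
      have h1 : Tendsto (fun j => |F m x - F (φ j) x| * ω x) atTop
          (nhds (|F m x - f x| * ω x)) :=
        ((tendsto_const_nhds.sub hx).abs).mul_const _
      have h2 : Tendsto (fun j => ENNReal.ofReal (|F m x - F (φ j) x| * ω x) ^ p x) atTop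
          (nhds (ENNReal.ofReal (|F m x - f x| * ω x) ^ p x)) :=
        (ENNReal.continuous_rpow_const.tendsto _).comp
          ((ENNReal.continuous_ofReal.tendsto _).comp h1)
      exact h2.liminf_eq.symm
    calc Ipw Ω p ω (fun x => F m x - f x)
        = ∫⁻ x, liminf
            (fun j => ENNReal.ofReal (|F m x - F (φ j) x| * ω x) ^ p x) atTop ∂μ := by
          rw [hI]; exact lintegral_congr_ae hpt
      _ ≤ liminf (fun j => Ipw Ω p ω (fun x => F m x - F (φ j) x)) atTop := by
          simp only [hI]
          exact lintegral_liminf_le fun j => meas ((hF m).1.sub (hF (φ j)).1)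
  -- the convergence in modular
  have htend : Tendsto (fun k => Ipw Ω p ω (fun x => F k x - f x)) atTop (nhds 0) := by
    rw [ENNReal.tendsto_atTop_zero]
    intro ε hε
    obtain ⟨M, hM⟩ := hcauchy ε hε
    refine ⟨M, fun m hm => ?_⟩
    refine (fatou m).trans ?_
    refine liminf_le_of_frequently_le' ?_
    refine ((eventually_atTop.mpr ⟨M, fun j hj => ?_⟩).frequently)
    exact (hM m (φ j) hm (hj.trans (hφmono.le_apply))).le
  -- finiteness of the modular of f
  have hffin : Ipw Ω p ω f < ∞ := by
    obtain ⟨M, hM⟩ := ENNReal.tendsto_atTop_zero.mp htend 1 one_pos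
    have h1 : Ipw Ω p ω f ≤ Ipw Ω p ω (fun x => f x - F M x) + Ipw Ω p ω (F M) := by
      have heq : Ipw Ω p ω f = Ipw Ω p ω (fun x => (f x - F M x) + F M x) := by
        congr 1; funext x; ring
      rw [heq]
      exact subadd _ _ (hfmeas.sub (hF M).1) (hF M).1
    have h2 : Ipw Ω p ω (fun x => f x - F M x) = Ipw Ω p ω (fun x => F M x - f x) := by
      simp only [hI]
      exact lintegral_congr fun x => by rw [abs_sub_comm]
    calc Ipw Ω p ω f ≤ Ipw Ω p ω (fun x => f x - F M x) + Ipw Ω p ω (F M) := h1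
      _ = Ipw Ω p ω (fun x => F M x - f x) + Ipw Ω p ω (F M) := by rw [h2]
      _ ≤ 1 + Ipw Ω p ω (F M) := add_le_add_left (hM M le_rfl) _
      _ < ∞ := ENNReal.add_lt_top.mpr ⟨ENNReal.one_lt_top, (hF M).2⟩
  exact ⟨f, hfmeas, hffin, htend⟩
end

section
/- (Sequence inequality, Lemma 5, inequality (4.1).) Let (p_n)_{n ≥ 1} be a nonincreasing sequence with 0 < p̲ ≤ p_n ≤ p̄ ≤ 1 for all n and p̲ = inf_n p_n, and let (x_n)_{n ≥ 1} be a sequence of nonnegative reals such that x_n^{p_n} ≥ x_{n+1}^{p_{n+1}} for all n ∈ ℕ. Then (∑_{n=1}^∞ x_n^{p_n/p̲})^{p̲} ≤ ∑_{n=1}^∞ x_n^{p_n} [n^{p_n} − (n−1)^{p_n}] ≤ ∑_{n=1}^∞ x_n^{p_n}. -/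
open scoped ENNReal

/-- Decreasing differences of `t ↦ t^p` for `0 < p ≤ 1`. -/
lemma aux_diff_seq_ineq {p : ℝ} (hp0 : 0 < p) (hp1 : p ≤ 1) {a b c : ℝ}
    (ha : 0 ≤ a) (hab : a ≤ b) (hc : 0 ≤ c) :
    (b + c) ^ p - b ^ p ≤ (a + c) ^ p - a ^ p := by
  have hanti : AntitoneOn (fun t : ℝ => (t + c) ^ p - t ^ p) (Set.Ici 0) := by
    have hint : interior (Set.Ici (0:ℝ)) = Set.Ioi 0 := interior_Ici
    have hD : ∀ t : ℝ, t ∈ Set.Ioi (0:ℝ) →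
        HasDerivAt (fun t : ℝ => (t + c) ^ p - t ^ p)
          (1 * p * (t + c) ^ (p - 1) - 1 * p * t ^ (p - 1)) t := by
      intro t ht
      have ht0 : (0:ℝ) < t := ht
      have h1 : HasDerivAt (fun t : ℝ => (t + c) ^ p) (1 * p * (t + c) ^ (p - 1)) t := by
        have h0 : HasDerivAt (fun t : ℝ => t + c) 1 t := (hasDerivAt_id t).add_const c
        exact h0.rpow_const (Or.inl (by positivity))
      have h2 : HasDerivAt (fun t : ℝ => t ^ p) (1 * p * t ^ (p - 1)) t := by
        have h0 : HasDerivAt (fun t : ℝ => t) 1 t := hasDerivAt_id t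
        exact h0.rpow_const (Or.inl ht0.ne')
      exact h1.sub h2
    apply antitoneOn_of_deriv_nonpos (convex_Ici 0)
    · apply ContinuousOn.sub
      · exact fun t ht => ((Real.continuousAt_rpow_const _ _ (Or.inr hp0.le)).comp
          (by continuity : Continuous fun t : ℝ => t + c).continuousAt).continuousWithinAt
      · exact fun t ht => (Real.continuousAt_rpow_const _ _ (Or.inr hp0.le)).continuousWithinAt
    · rw [hint]
      exact fun t ht => (hD t ht).differentiableAt.differentiableWithinAt
    · rw [hint]
      intro t ht
      rw [(hD t ht).deriv]
      have ht0 : (0:ℝ) < t := ht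
      have : (t + c) ^ (p - 1) ≤ t ^ (p - 1) :=
        Real.rpow_le_rpow_of_nonpos ht0 (by linarith) (by linarith)
      nlinarith [Real.rpow_nonneg (by linarith : (0:ℝ) ≤ t + c) (p - 1)]
  have h1 : (b:ℝ) ∈ Set.Ici (0:ℝ) := le_trans ha hab
  have := hanti ha h1 hab
  simpa using this

/-- Key finite inequality: for nonincreasing nonnegative `a` and `0 < p ≤ 1`,
`(∑_{k<N} a k)^p ≤ ∑_{k<N} (a k)^p ((k+1)^p - k^p)`. -/
lemma key_seq_ineq {p : ℝ} (hp0 : 0 < p) (hp1 : p ≤ 1) (a : ℕ → ℝ)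
    (ha : ∀ n, 0 ≤ a n) (hmono : ∀ n, a (n + 1) ≤ a n) (N : ℕ) :
    (∑ k ∈ Finset.range N, a k) ^ p ≤
      ∑ k ∈ Finset.range N, (a k) ^ p * (((k : ℝ) + 1) ^ p - (k : ℝ) ^ p) := by
  have hanti : Antitone a := antitone_nat_of_succ_le hmono
  induction N with
  | zero => simp [Real.zero_rpow hp0.ne']
  | succ N ih =>
    rw [Finset.sum_range_succ, Finset.sum_range_succ]
    set S := ∑ k ∈ Finset.range N, a k with hS
    have hS0 : 0 ≤ S := Finset.sum_nonneg fun k _ => ha k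
    have hNS : (N : ℝ) * a N ≤ S := by
      calc (N : ℝ) * a N = ∑ _k ∈ Finset.range N, a N := by
            rw [Finset.sum_const, Finset.card_range, nsmul_eq_mul]
        _ ≤ S := Finset.sum_le_sum fun k hk => hanti (Finset.mem_range.1 hk).le
    have hdiff : (S + a N) ^ p - S ^ p ≤
        ((N : ℝ) * a N + a N) ^ p - ((N : ℝ) * a N) ^ p :=
      aux_diff_seq_ineq hp0 hp1 (mul_nonneg (Nat.cast_nonneg N) (ha N)) hNS (ha N)
    have heq : ((N : ℝ) * a N + a N) ^ p - ((N : ℝ) * a N) ^ p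
        = (a N) ^ p * (((N : ℝ) + 1) ^ p - (N : ℝ) ^ p) := by
      have h1 : ((N : ℝ) * a N + a N) = ((N : ℝ) + 1) * a N := by ring
      rw [h1, Real.mul_rpow (by positivity) (ha N), Real.mul_rpow (Nat.cast_nonneg N) (ha N)]
      ring
    have := ih
    linarith [hdiff, heq ▸ hdiff]

/-- Sequence inequality (Lemma 5, inequality (4.1)): for a nonincreasing exponent
sequence `p_n` with `0 < p̲ ≤ p_n ≤ p̄ ≤ 1`, `p̲ = inf_n p_n`, and nonnegative
`x_n` with `x_n^{p_n}` nonincreasing,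
`(∑ x_n^{p_n/p̲})^{p̲} ≤ ∑ x_n^{p_n} [n^{p_n} - (n-1)^{p_n}] ≤ ∑ x_n^{p_n}`,
with sums taken in `[0,∞]`. -/
theorem sequence_inequality
    (p x : ℕ → ℝ) (pl pu : ℝ)
    (hpl : 0 < pl) (hpu : pu ≤ 1)
    (hb : ∀ n : ℕ, 1 ≤ n → pl ≤ p n ∧ p n ≤ pu)
    (hmono : ∀ n : ℕ, 1 ≤ n → p (n + 1) ≤ p n)
    (hinf : pl = ⨅ n : {k : ℕ // 1 ≤ k}, p (n : ℕ))
    (hx : ∀ n : ℕ, 1 ≤ n → 0 ≤ x n)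
    (hxm : ∀ n : ℕ, 1 ≤ n → x (n + 1) ^ p (n + 1) ≤ x n ^ p n) :
    (∑' n : ℕ, ENNReal.ofReal (x (n + 1) ^ (p (n + 1) / pl))) ^ pl ≤
      (∑' n : ℕ, ENNReal.ofReal (x (n + 1) ^ p (n + 1) *
        (((n : ℝ) + 1) ^ p (n + 1) - (n : ℝ) ^ p (n + 1)))) ∧
    (∑' n : ℕ, ENNReal.ofReal (x (n + 1) ^ p (n + 1) *
        (((n : ℝ) + 1) ^ p (n + 1) - (n : ℝ) ^ p (n + 1)))) ≤
      ∑' n : ℕ, ENNReal.ofReal (x (n + 1) ^ p (n + 1)) := by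
  -- basic facts
  have hpl1 : pl ≤ 1 := le_trans (hb 1 le_rfl).1 (le_trans (hb 1 le_rfl).2 hpu)
  set a : ℕ → ℝ := fun n => x (n + 1) ^ p (n + 1) with ha_def
  have ha : ∀ n, 0 ≤ a n := fun n => Real.rpow_nonneg (hx (n + 1) (Nat.le_add_left 1 n)) _
  have hamono : ∀ n, a (n + 1) ≤ a n := fun n => hxm (n + 1) (Nat.le_add_left 1 n)
  have hq : ∀ n : ℕ, pl ≤ p (n + 1) := fun n => (hb (n + 1) (Nat.le_add_left 1 n)).1
  have hq1 : ∀ n : ℕ, p (n + 1) ≤ 1 := fun n =>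
    le_trans (hb (n + 1) (Nat.le_add_left 1 n)).2 hpu
  -- the difference terms
  have hdnonneg : ∀ n : ℕ, 0 ≤ ((n : ℝ) + 1) ^ p (n + 1) - (n : ℝ) ^ p (n + 1) := by
    intro n
    have := Real.rpow_le_rpow (Nat.cast_nonneg n) (by linarith : (n : ℝ) ≤ (n : ℝ) + 1)
      (le_trans hpl.le (hq n))
    linarith
  constructor
  · -- first inequality
    -- step 1: exponent monotonicity of differences
    have hexp : ∀ n : ℕ, ((n : ℝ) + 1) ^ pl - (n : ℝ) ^ pl ≤
        ((n : ℝ) + 1) ^ p (n + 1) - (n : ℝ) ^ p (n + 1) := by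
      intro n
      rcases Nat.eq_zero_or_pos n with h0 | h0
      · subst h0
        simp [Real.zero_rpow hpl.ne', Real.zero_rpow (lt_of_lt_of_le hpl (hq 0)).ne']
      · have hn1 : (1:ℝ) ≤ (n:ℝ) := by exact_mod_cast h0
        set q := p (n + 1) with hqdef
        have hplq : pl ≤ q := hq n
        have hr : q = pl + (q - pl) := by ring
        have hk1 : (1:ℝ) ≤ (n:ℝ) ^ (q - pl) :=
          Real.one_le_rpow hn1 (by linarith)
        have hsplit1 : ((n:ℝ) + 1) ^ q = ((n:ℝ) + 1) ^ pl * ((n:ℝ) + 1) ^ (q - pl) := by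
          rw [← Real.rpow_add (by linarith)]; ring_nf
        have hsplit2 : ((n:ℝ)) ^ q = ((n:ℝ)) ^ pl * ((n:ℝ)) ^ (q - pl) := by
          rw [← Real.rpow_add (by linarith)]; ring_nf
        have hbase : ((n:ℝ)) ^ (q - pl) ≤ ((n:ℝ) + 1) ^ (q - pl) :=
          Real.rpow_le_rpow (by linarith) (by linarith) (by linarith)
        have hplmono : ((n:ℝ)) ^ pl ≤ ((n:ℝ) + 1) ^ pl :=
          Real.rpow_le_rpow (by linarith) (by linarith) hpl.le
        have hnn : 0 ≤ ((n:ℝ)) ^ pl := Real.rpow_nonneg (by linarith) _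
        have hnn1 : 0 ≤ ((n:ℝ) + 1) ^ pl := Real.rpow_nonneg (by linarith) _
        calc ((n:ℝ) + 1) ^ pl - (n:ℝ) ^ pl
            ≤ ((n:ℝ)) ^ (q - pl) * (((n:ℝ) + 1) ^ pl - (n:ℝ) ^ pl) := by
              nlinarith
          _ ≤ ((n:ℝ) + 1) ^ pl * ((n:ℝ) + 1) ^ (q - pl) - (n:ℝ) ^ pl * (n:ℝ) ^ (q - pl) := by
              nlinarith
          _ = ((n:ℝ) + 1) ^ q - (n:ℝ) ^ q := by rw [hsplit1, hsplit2]
    -- c k = a k ^ (1/pl)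
    set c : ℕ → ℝ := fun n => a n ^ (1 / pl) with hc_def
    have hc : ∀ n, 0 ≤ c n := fun n => Real.rpow_nonneg (ha n) _
    have hcx : ∀ n : ℕ, x (n + 1) ^ (p (n + 1) / pl) = c n := by
      intro n
      simp only [hc_def, ha_def]
      rw [← Real.rpow_mul (hx (n + 1) (Nat.le_add_left 1 n)), mul_one_div]
    have hcmono : ∀ n, c (n + 1) ≤ c n := fun n =>
      Real.rpow_le_rpow (ha _) (hamono n) (by positivity)
    have hcpl : ∀ n, (c n) ^ pl = a n := by
      intro n
      rw [hc_def, ← Real.rpow_mul (ha n), one_div, inv_mul_cancel₀ hpl.ne', Real.rpow_one]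
    -- finite sums inequality in ℝ
    have hfin : ∀ N : ℕ, (∑ k ∈ Finset.range N, c k) ^ pl ≤
        ∑ k ∈ Finset.range N, a k * (((k : ℝ) + 1) ^ p (k + 1) - (k : ℝ) ^ p (k + 1)) := by
      intro N
      refine le_trans (key_seq_ineq hpl hpl1 c hc hcmono N) (Finset.sum_le_sum ?_)
      intro k _
      rw [hcpl k]
      exact mul_le_mul_of_nonneg_left (hexp k) (ha k)
    -- pass to ENNReal
    set T : ℝ≥0∞ := ∑' n : ℕ, ENNReal.ofReal (x (n + 1) ^ p (n + 1) *
        (((n : ℝ) + 1) ^ p (n + 1) - (n : ℝ) ^ p (n + 1))) with hT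
    have hLHS : (∑' n : ℕ, ENNReal.ofReal (x (n + 1) ^ (p (n + 1) / pl))) ≤ T ^ (1 / pl) := by
      rw [ENNReal.tsum_eq_iSup_nat]
      refine iSup_le fun N => ?_
      have hsum : ∑ k ∈ Finset.range N, ENNReal.ofReal (x (k + 1) ^ (p (k + 1) / pl))
          = ENNReal.ofReal (∑ k ∈ Finset.range N, c k) := by
        rw [ENNReal.ofReal_sum_of_nonneg fun k _ => hc k]
        exact Finset.sum_congr rfl fun k _ => by rw [hcx k]
      rw [hsum]
      have hpow : (ENNReal.ofReal (∑ k ∈ Finset.range N, c k)) ^ pl ≤ T := by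
        rw [ENNReal.ofReal_rpow_of_nonneg (Finset.sum_nonneg fun k _ => hc k) hpl.le]
        calc ENNReal.ofReal ((∑ k ∈ Finset.range N, c k) ^ pl)
            ≤ ENNReal.ofReal (∑ k ∈ Finset.range N,
                a k * (((k : ℝ) + 1) ^ p (k + 1) - (k : ℝ) ^ p (k + 1))) :=
              ENNReal.ofReal_le_ofReal (hfin N)
          _ = ∑ k ∈ Finset.range N, ENNReal.ofReal
                (a k * (((k : ℝ) + 1) ^ p (k + 1) - (k : ℝ) ^ p (k + 1))) :=
              ENNReal.ofReal_sum_of_nonneg fun k _ => mul_nonneg (ha k) (hdnonneg k)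
          _ ≤ T := ENNReal.sum_le_tsum _
      calc ENNReal.ofReal (∑ k ∈ Finset.range N, c k)
          = ((ENNReal.ofReal (∑ k ∈ Finset.range N, c k)) ^ pl) ^ (1 / pl) := by
            rw [← ENNReal.rpow_mul, mul_one_div, div_self hpl.ne', ENNReal.rpow_one]
        _ ≤ T ^ (1 / pl) := ENNReal.rpow_le_rpow hpow (by positivity)
    calc (∑' n : ℕ, ENNReal.ofReal (x (n + 1) ^ (p (n + 1) / pl))) ^ pl
        ≤ (T ^ (1 / pl)) ^ pl := ENNReal.rpow_le_rpow hLHS hpl.le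
      _ = T := by rw [← ENNReal.rpow_mul, one_div, inv_mul_cancel₀ hpl.ne', ENNReal.rpow_one]
  · -- second inequality
    refine ENNReal.tsum_le_tsum fun n => ENNReal.ofReal_le_ofReal ?_
    have hd1 : ((n : ℝ) + 1) ^ p (n + 1) - (n : ℝ) ^ p (n + 1) ≤ 1 := by
      have hnn : (0:ℝ) ≤ p (n + 1) := le_trans hpl.le (hq n)
      have h := NNReal.rpow_add_le_add_rpow (n : NNReal) 1 hnn (hq1 n)
      have h2 := NNReal.coe_le_coe.2 h
      push_cast at h2
      rw [Real.one_rpow] at h2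
      linarith
    exact mul_le_of_le_one_right (ha n) hd1
end

section
/- (Finite sequence inequality (4.2).) Let m ∈ ℕ, let p₁ ≥ p₂ ≥ … ≥ p_m with 0 < p_n ≤ 1 for all n, and let x₁, …, x_m be nonnegative reals such that x_n^{p_n} ≥ x_{n+1}^{p_{n+1}} for 1 ≤ n ≤ m − 1. Then (∑_{n=1}^m x_n^{p_n/p_m})^{p_m} ≤ ∑_{n=1}^m x_n^{p_n} [n^{p_n} − (n−1)^{p_n}]. -/
open Finset Real

/-- Chain lemma: adjacent monotonicity implies full antitonicity on `[1, m]`. -/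
private lemma chain_aux (a : ℕ → ℝ) (m : ℕ)
    (h : ∀ n : ℕ, 1 ≤ n → n < m → a (n + 1) ≤ a n) :
    ∀ k : ℕ, k ≤ m → ∀ n : ℕ, 1 ≤ n → n ≤ k → a k ≤ a n := by
  intro k
  induction k with
  | zero => intro _ n h1 h2; omega
  | succ j ih =>
    intro hkm n h1 h2
    rcases eq_or_lt_of_le h2 with rfl | hlt
    · exact le_rfl
    · have hnj : n ≤ j := by omega
      have h1j : 1 ≤ j := le_trans h1 hnj
      exact (h j h1j (by omega)).trans (ih (by omega) n h1 hnj)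

/-- Concavity step: for `0 < p ≤ 1`, `t ↦ (t+c)^p - t^p` is antitone on `[0,∞)`. -/
private lemma concave_key {p : ℝ} (hp : 0 < p) (hp1 : p ≤ 1) {s t c : ℝ}
    (hs : 0 ≤ s) (hst : s ≤ t) (hc : 0 ≤ c) :
    (t + c) ^ p - t ^ p ≤ (s + c) ^ p - s ^ p := by
  have ht : 0 ≤ t := hs.trans hst
  rcases eq_or_lt_of_le (show s ≤ t + c by linarith) with heq | hlt
  · have hst' : s = t := le_antisymm hst (by nlinarith)
    have hc0 : c = 0 := by linarith [hst'.symm ▸ heq]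
    simp [hst', hc0]
  · have hcon := Real.concaveOn_rpow hp.le hp1
    set θ : ℝ := (t - s) / (t + c - s) with hθdef
    have hden : 0 < t + c - s := by linarith
    have hθ0 : 0 ≤ θ := div_nonneg (by linarith) hden.le
    have hθ1 : θ ≤ 1 := by
      rw [div_le_one hden]; linarith
    have h1 : (1 - θ) • s + θ • (t + c) = t := by
      have hθm : θ * (t + c - s) = t - s := by rw [hθdef]; exact div_mul_cancel₀ _ hden.ne'
      simp only [smul_eq_mul]; linear_combination hθm
    have h2 : θ • s + (1 - θ) • (t + c) = s + c := by
      have hθm : θ * (t + c - s) = t - s := by rw [hθdef]; exact div_mul_cancel₀ _ hden.ne'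
      simp only [smul_eq_mul]; linear_combination (-1 : ℝ) * hθm
    have hA := hcon.2 (Set.mem_Ici.2 hs) (Set.mem_Ici.2 (by linarith : (0:ℝ) ≤ t + c))
      (by linarith : (0:ℝ) ≤ 1 - θ) hθ0 (by ring)
    have hB := hcon.2 (Set.mem_Ici.2 hs) (Set.mem_Ici.2 (by linarith : (0:ℝ) ≤ t + c))
      hθ0 (by linarith : (0:ℝ) ≤ 1 - θ) (by ring)
    rw [h1] at hA
    rw [h2] at hB
    simp only [smul_eq_mul] at hA hB
    nlinarith [hA, hB]

/-- Monotonicity in the exponent: for `1 ≤ b`, `0 ≤ a ≤ b`, `0 < p ≤ q`,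
`b^p - a^p ≤ b^q - a^q`. -/
private lemma mono_exp {a b p q : ℝ} (ha : 0 ≤ a) (hab : a ≤ b) (hb : 1 ≤ b)
    (hp : 0 < p) (hpq : p ≤ q) : b ^ p - a ^ p ≤ b ^ q - a ^ q := by
  have hq : 0 < q := lt_of_lt_of_le hp hpq
  have hb0 : (0:ℝ) < b := lt_of_lt_of_le one_pos hb
  rcases eq_or_lt_of_le ha with rfl | ha0
  · rw [Real.zero_rpow hp.ne', Real.zero_rpow hq.ne']
    simpa using Real.rpow_le_rpow_of_exponent_le hb hpq
  · set r : ℝ := a / b with hrdef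
    have hr0 : 0 < r := div_pos ha0 hb0
    have hr1 : r ≤ 1 := (div_le_one hb0).2 hab
    have hap : a ^ p = r ^ p * b ^ p := by
      rw [← Real.mul_rpow (le_of_lt hr0) hb0.le, hrdef, div_mul_cancel₀ _ hb0.ne']
    have haq : a ^ q = r ^ q * b ^ q := by
      rw [← Real.mul_rpow (le_of_lt hr0) hb0.le, hrdef, div_mul_cancel₀ _ hb0.ne']
    rw [hap, haq]
    have h1 : b ^ p - r ^ p * b ^ p = (1 - r ^ p) * b ^ p := by ring
    have h2 : b ^ q - r ^ q * b ^ q = (1 - r ^ q) * b ^ q := by ring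
    rw [h1, h2]
    have hrp1 : r ^ p ≤ 1 := Real.rpow_le_one hr0.le hr1 hp.le
    have hrqp : r ^ q ≤ r ^ p := Real.rpow_le_rpow_of_exponent_ge hr0 hr1 hpq
    have hbpq : b ^ p ≤ b ^ q := Real.rpow_le_rpow_of_exponent_le hb hpq
    have hbp0 : 0 ≤ b ^ p := Real.rpow_nonneg hb0.le p
    nlinarith

/-- Key lemma: fixed exponent version. -/
private lemma key_lemma (P : ℝ) (hP : 0 < P) (hP1 : P ≤ 1) (m : ℕ) (a : ℕ → ℝ)
    (ha : ∀ n : ℕ, 1 ≤ n → n ≤ m → 0 ≤ a n)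
    (hmono : ∀ n : ℕ, 1 ≤ n → n < m → a (n + 1) ≤ a n) :
    (∑ n ∈ Finset.Icc 1 m, a n ^ (1 / P)) ^ P ≤
      ∑ n ∈ Finset.Icc 1 m, a n * ((n : ℝ) ^ P - ((n : ℝ) - 1) ^ P) := by
  induction m with
  | zero => simp [Real.zero_rpow hP.ne']
  | succ m ih =>
    have ham1 : 0 ≤ a (m + 1) := ha (m + 1) (by omega) le_rfl
    have ih' := ih (fun n h1 h2 => ha n h1 (by omega)) (fun n h1 h2 => hmono n h1 (by omega))
    rw [Finset.sum_Icc_succ_top (by omega : 1 ≤ m + 1),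
        Finset.sum_Icc_succ_top (by omega : 1 ≤ m + 1)]
    set S : ℝ := ∑ n ∈ Finset.Icc 1 m, a n ^ (1 / P) with hSdef
    set c : ℝ := a (m + 1) ^ (1 / P) with hcdef
    have hc : 0 ≤ c := Real.rpow_nonneg ham1 _
    have hS : 0 ≤ S := Finset.sum_nonneg fun n hn => Real.rpow_nonneg
      (ha n (Finset.mem_Icc.1 hn).1 (by have := (Finset.mem_Icc.1 hn).2; omega)) _
    have hcP : c ^ P = a (m + 1) := by
      rw [hcdef, one_div, Real.rpow_inv_rpow ham1 hP.ne']
    -- S ≥ m * c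
    have hmc : (m : ℝ) * c ≤ S := by
      have : ∀ n ∈ Finset.Icc 1 m, c ≤ a n ^ (1 / P) := by
        intro n hn
        obtain ⟨h1, h2⟩ := Finset.mem_Icc.1 hn
        have := chain_aux a (m + 1) hmono (m + 1) le_rfl n h1 (by omega)
        exact Real.rpow_le_rpow ham1 this (by positivity)
      calc (m : ℝ) * c = ∑ _n ∈ Finset.Icc 1 m, c := by
            rw [Finset.sum_const, Nat.card_Icc]; simp [mul_comm]
        _ ≤ S := Finset.sum_le_sum this
    -- the concavity step
    have hkey : (S + c) ^ P - S ^ P ≤ ((m : ℝ) * c + c) ^ P - ((m : ℝ) * c) ^ P :=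
      concave_key hP hP1 (by positivity) hmc hc
    have hmul1 : ((m : ℝ) * c + c) ^ P = ((m : ℝ) + 1) ^ P * c ^ P := by
      rw [show (m : ℝ) * c + c = ((m : ℝ) + 1) * c by ring,
          Real.mul_rpow (by positivity) hc]
    have hmul2 : ((m : ℝ) * c) ^ P = (m : ℝ) ^ P * c ^ P := by
      rw [Real.mul_rpow (by positivity) hc]
    have hstep : (S + c) ^ P ≤ S ^ P + a (m + 1) * (((m : ℝ) + 1) ^ P - (m : ℝ) ^ P) := by
      have : ((m : ℝ) * c + c) ^ P - ((m : ℝ) * c) ^ P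
          = a (m + 1) * (((m : ℝ) + 1) ^ P - (m : ℝ) ^ P) := by
        rw [hmul1, hmul2, ← hcP]; ring
      linarith [hkey, this ▸ hkey]
    have hcast : ((m + 1 : ℕ) : ℝ) = (m : ℝ) + 1 := by push_cast; ring
    calc (S + c) ^ P ≤ S ^ P + a (m + 1) * (((m : ℝ) + 1) ^ P - (m : ℝ) ^ P) := hstep
      _ ≤ (∑ n ∈ Finset.Icc 1 m, a n * ((n : ℝ) ^ P - ((n : ℝ) - 1) ^ P))
          + a (m + 1) * (((m + 1 : ℕ) : ℝ) ^ P - (((m + 1 : ℕ) : ℝ) - 1) ^ P) := by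
          rw [hcast]
          have : (m : ℝ) + 1 - 1 = (m : ℝ) := by ring
          rw [this]
          linarith [ih']

/-- Finite sequence inequality (4.2): for `p₁ ≥ … ≥ p_m` in `(0,1]` and
nonnegative `x_n` with `x_n^{p_n}` nonincreasing,
`(∑_{n=1}^m x_n^{p_n/p_m})^{p_m} ≤ ∑_{n=1}^m x_n^{p_n} [n^{p_n} - (n-1)^{p_n}]`. -/
theorem finite_sequence_inequality
    (m : ℕ) (hm : 1 ≤ m) (p x : ℕ → ℝ)
    (hp : ∀ n : ℕ, 1 ≤ n → n ≤ m → 0 < p n ∧ p n ≤ 1)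
    (hmono : ∀ n : ℕ, 1 ≤ n → n < m → p (n + 1) ≤ p n)
    (hx : ∀ n : ℕ, 1 ≤ n → n ≤ m → 0 ≤ x n)
    (hxm : ∀ n : ℕ, 1 ≤ n → n < m → x (n + 1) ^ p (n + 1) ≤ x n ^ p n) :
    (∑ n ∈ Finset.Icc 1 m, x n ^ (p n / p m)) ^ p m ≤
      ∑ n ∈ Finset.Icc 1 m, x n ^ p n * ((n : ℝ) ^ p n - ((n : ℝ) - 1) ^ p n) := by
  obtain ⟨hPm, hPm1⟩ := hp m hm le_rfl
  set a : ℕ → ℝ := fun n => x n ^ p n with hadef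
  have ha : ∀ n : ℕ, 1 ≤ n → n ≤ m → 0 ≤ a n := fun n h1 h2 =>
    Real.rpow_nonneg (hx n h1 h2) _
  have hlhs : (∑ n ∈ Finset.Icc 1 m, x n ^ (p n / p m))
      = ∑ n ∈ Finset.Icc 1 m, a n ^ (1 / p m) := by
    refine Finset.sum_congr rfl fun n hn => ?_
    obtain ⟨h1, h2⟩ := Finset.mem_Icc.1 hn
    simp only [hadef]
    rw [← Real.rpow_mul (hx n h1 h2), mul_one_div]
  rw [hlhs]
  refine le_trans (key_lemma (p m) hPm hPm1 m a ha ?_) ?_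
  · exact fun n h1 h2 => hxm n h1 h2
  · refine Finset.sum_le_sum fun n hn => ?_
    obtain ⟨h1, h2⟩ := Finset.mem_Icc.1 hn
    have hn1 : (1 : ℝ) ≤ (n : ℝ) := by exact_mod_cast h1
    have hpq : p m ≤ p n := chain_aux p m hmono m le_rfl n h1 h2
    exact mul_le_mul_of_nonneg_left
      (mono_exp (by linarith) (by linarith) hn1 hPm hpq) (ha n h1 h2)
end

section
/- (Inequality (4.3).) Let 0 < q < 1 and B > 0. Then for every t with 0 ≤ t ≤ B, (1 + t)^q ≤ 1 + t^q [(B⁻¹ + 1)^q − B^{−q}]. -/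
/-- The function `x ↦ (1+x)^q - x^q` is antitone on positives for `0 < q < 1`. -/
lemma aux_antitone (q : ℝ) (hq0 : 0 < q) (hq1 : q < 1) {a b : ℝ}
    (ha : 0 < a) (hab : a ≤ b) :
    (1 + b) ^ q - b ^ q ≤ (1 + a) ^ q - a ^ q := by
  set f : ℝ → ℝ := fun x => (1 + x) ^ q - x ^ q with hf
  have hder : ∀ x ∈ Set.Ici a, HasDerivAt f (q * (1 + x) ^ (q - 1) * 1 - q * x ^ (q - 1)) x := by
    intro x hx
    have hx0 : 0 < x := lt_of_lt_of_le ha hx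
    have h1 : HasDerivAt (fun x : ℝ => (1 + x) ^ q) (q * (1 + x) ^ (q - 1) * 1) x := by
      have := (Real.hasDerivAt_rpow_const (p := q)
        (Or.inl (by positivity : (0:ℝ) < 1 + x).ne')).comp x
        ((hasDerivAt_id x).const_add 1)
      simpa [Function.comp_def] using this
    have h2 : HasDerivAt (fun x : ℝ => x ^ q) (q * x ^ (q - 1)) x :=
      Real.hasDerivAt_rpow_const (Or.inl hx0.ne')
    exact h1.sub h2
  have hanti : AntitoneOn f (Set.Ici a) := by
    apply antitoneOn_of_deriv_nonpos (convex_Ici a)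
    · exact fun x hx => (hder x hx).continuousAt.continuousWithinAt
    · intro x hx
      rw [interior_Ici] at hx
      exact (hder x (Set.mem_Ici.mpr (le_of_lt hx))).differentiableAt.differentiableWithinAt
    · intro x hx
      rw [interior_Ici] at hx
      rw [(hder x (Set.mem_Ici.mpr (le_of_lt hx))).deriv]
      have hx0 : 0 < x := lt_trans ha hx
      have : (1 + x) ^ (q - 1) ≤ x ^ (q - 1) :=
        Real.rpow_le_rpow_of_nonpos hx0 (by linarith) (by linarith)
      nlinarith
  exact hanti (Set.self_mem_Ici) hab hab

/-- Inequality (4.3): for `0 < q < 1`, `B > 0` and `0 ≤ t ≤ B`,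
`(1 + t)^q ≤ 1 + t^q [(B⁻¹ + 1)^q - B^{-q}]`. -/
theorem pow_one_add_le
    (q B t : ℝ) (hq0 : 0 < q) (hq1 : q < 1) (hB : 0 < B)
    (ht0 : 0 ≤ t) (htB : t ≤ B) :
    (1 + t) ^ q ≤ 1 + t ^ q * ((B⁻¹ + 1) ^ q - B ^ (-q)) := by
  rcases eq_or_lt_of_le ht0 with h0 | ht
  · rw [← h0, Real.zero_rpow hq0.ne', add_zero, Real.one_rpow, mul_comm, mul_zero, add_zero]
  · have hkey := aux_antitone q hq0 hq1 (a := B⁻¹) (b := t⁻¹)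
      (by positivity) (by exact inv_anti₀ ht htB)
    have ht0' : (0:ℝ) < t ^ q := Real.rpow_pos_of_pos ht q
    have hmul := mul_le_mul_of_nonneg_left hkey ht0'.le
    have e1 : t ^ q * ((1 + t⁻¹) ^ q - t⁻¹ ^ q) = (1 + t) ^ q - 1 := by
      rw [mul_sub, ← Real.mul_rpow ht.le (by positivity), ← Real.mul_rpow ht.le (by positivity)]
      rw [mul_inv_cancel₀ ht.ne', Real.one_rpow]
      rw [mul_add, mul_inv_cancel₀ ht.ne', mul_one, add_comm]
    have e2 : t ^ q * ((1 + B⁻¹) ^ q - B⁻¹ ^ q) = t ^ q * ((B⁻¹ + 1) ^ q - B ^ (-q)) := by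
      rw [Real.rpow_neg hB.le, ← Real.inv_rpow hB.le, add_comm]
    rw [e1, e2] at hmul
    linarith
end

section
/- (Lemma 2.) Let 0 < s < 1, let −∞ < a < b ≤ ∞, and let f be a nonnegative, decreasing (nonincreasing) function on (a, b). Then (∫_a^b f(x) dx)^s ≤ s ∫_a^b f(x)^s (x − a)^{s−1} dx. -/
open MeasureTheory

open Function Filter Set Topology intervalIntegral
open scoped ENNReal NNReal

-- right-continuity of rightLim of an antitone function
lemma antitone_rightLim_continuousWithinAt {q : ℝ → ℝ} (hq : Antitone q) (x : ℝ) :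
    ContinuousWithinAt (rightLim q) (Ici x) x := by
  have hA : Antitone (rightLim q) := hq.rightLim
  rw [← continuousWithinAt_Ioi_iff_Ici]
  rw [hA.continuousWithinAt_Ioi_iff_rightLim_eq]
  apply le_antisymm
  · exact hA.rightLim_le le_rfl
  · -- rightLim q x ≤ rightLim (rightLim q) x
    have h1 : ∀ u, x < u → q u ≤ rightLim (rightLim q) x := by
      intro u hu
      refine ge_of_tendsto (hA.tendsto_rightLim x) ?_
      filter_upwards [Ioo_mem_nhdsGT_of_mem (Set.left_mem_Ico.2 hu)] with t ht
      exact hq.le_rightLim ht.2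
    refine le_of_tendsto (hq.tendsto_rightLim x) ?_
    filter_upwards [self_mem_nhdsWithin] with u hu
    exact h1 u hu

-- subadditivity of rpow for 0 ≤ s ≤ 1 on nonneg reals
lemma real_rpow_add_le {x y s : ℝ} (hx : 0 ≤ x) (hy : 0 ≤ y) (hs : 0 ≤ s) (hs1 : s ≤ 1) :
    (x + y) ^ s ≤ x ^ s + y ^ s := by
  lift x to NNReal using hx
  lift y to NNReal using hy
  have := NNReal.rpow_add_le_add_rpow x y hs hs1
  exact_mod_cast this

lemma lemA {s : ℝ} (hs0 : 0 < s) (hs1 : s < 1) {g : ℝ → ℝ} (hg : Antitone g)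
    (h0 : ∀ x, 0 ≤ g x) (hrc : ∀ x, ContinuousWithinAt g (Ici x) x)
    {a a' c : ℝ} (h1 : a < a') (h2 : a' < c) :
    (∫ x in a'..c, g x) ^ s ≤
      ((a' - a) * g a') ^ s + s * ∫ x in a'..c, g x ^ s * (x - a) ^ (s - 1) := by
  set F : ℝ → ℝ := fun u => ∫ x in a'..u, g x with hF
  set K : ℝ := (a' - a) * g a' with hKdef
  have hK : 0 ≤ K := mul_nonneg (by linarith) (h0 a')
  have hgi : ∀ u v : ℝ, IntervalIntegrable g volume u v := fun u v => hg.intervalIntegrable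
  have hFc : Continuous F := intervalIntegral.continuous_primitive hgi a'
  have hFnonneg : ∀ u, a' ≤ u → 0 ≤ F u := fun u hu =>
    intervalIntegral.integral_nonneg hu (fun x _ => h0 x)
  have hFlow : ∀ x, a' ≤ x → (x - a') * g x ≤ F x := by
    intro x hx
    have := intervalIntegral.integral_mono_on (f := fun _ => g x) (g := g) hx
      intervalIntegrable_const (hgi a' x) (fun t ht => hg ht.2)
    simpa using this
  set G : ℝ → ℝ := fun u => (F u + K) ^ s with hGdef
  set G' : ℝ → ℝ := fun x => if F x + K = 0 then 0 else g x * s * (F x + K) ^ (s - 1) with hG'def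
  set φ : ℝ → ℝ := fun x => s * (g x ^ s * (x - a) ^ (s - 1)) with hφdef
  have hGcont : ContinuousOn G (Icc a' c) :=
    (hFc.add continuous_const).continuousOn.rpow_const (fun x _ => Or.inr hs0.le)
  have hφint : IntegrableOn φ (Icc a' c) := by
    refine Integrable.mono' (g := fun _ => s * (g a' ^ s * (a' - a) ^ (s - 1)))
      (integrableOn_const measure_Icc_lt_top.ne) ?_ ?_
    · exact (((hg.measurable.pow measurable_const).mul
        (((measurable_id.sub_const a)).pow measurable_const)).const_mul s).aestronglyMeasurable
    · rw [ae_restrict_iff' measurableSet_Icc]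
      refine ae_of_all _ (fun x hx => ?_)
      have hgx : g x ^ s ≤ g a' ^ s := Real.rpow_le_rpow (h0 x) (hg hx.1) hs0.le
      have hxa : (x - a) ^ (s - 1) ≤ (a' - a) ^ (s - 1) :=
        Real.rpow_le_rpow_of_nonpos (by linarith) (by linarith [hx.1]) (by linarith)
      have e1 : 0 ≤ g x ^ s := Real.rpow_nonneg (h0 x) s
      have e2 : 0 ≤ (x - a) ^ (s - 1) := Real.rpow_nonneg (by linarith [hx.1]) _
      rw [Real.norm_eq_abs, abs_of_nonneg (by positivity)]
      have : g x ^ s * (x - a) ^ (s - 1) ≤ g a' ^ s * (a' - a) ^ (s - 1) := by nlinarith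
      exact mul_le_mul_of_nonneg_left this hs0.le
  have hderiv : ∀ x ∈ Ioo a' c, HasDerivWithinAt G (G' x) (Ioi x) x := by
    intro x hx
    by_cases hFK : F x + K = 0
    · have hFx0 : F x = 0 := by have := hFnonneg x hx.1.le; linarith
      have hK0 : K = 0 := by linarith
      have hgx : g x = 0 := by
        have h3 := hFlow x hx.1.le
        have h4 := h0 x
        nlinarith [hx.1]
      have hFy : ∀ y, x ≤ y → F y = 0 := by
        intro y hy
        have hadd : (∫ t in a'..x, g t) + (∫ t in x..y, g t) = ∫ t in a'..y, g t :=
          intervalIntegral.integral_add_adjacent_intervals (hgi a' x) (hgi x y)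
        have hzero : (∫ t in x..y, g t) = 0 := by
          have : EqOn g (fun _ => (0:ℝ)) (uIcc x y) := by
            intro t ht
            rw [uIcc_of_le hy] at ht
            exact le_antisymm (hgx ▸ hg ht.1) (h0 t)
          rw [intervalIntegral.integral_congr this]
          simp
        have : F y = F x + ∫ t in x..y, g t := by rw [hF]; dsimp; rw [← hadd]
        rw [this, hFx0, hzero]; ring
      have hGy : ∀ y, x ≤ y → G y = 0 := by
        intro y hy
        simp [hGdef, hFy y hy, hK0, Real.zero_rpow hs0.ne']
      have : HasDerivWithinAt G 0 (Ioi x) x := by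
        refine (hasDerivWithinAt_const x (Ioi x) (0:ℝ)).congr ?_ ?_
        · exact fun y hy => hGy y (le_of_lt hy)
        · exact hGy x le_rfl
      simpa [hG'def, if_pos hFK] using this
    · have hmeas : StronglyMeasurableAtFilter g (𝓝[>] x) :=
        hg.measurable.stronglyMeasurable.stronglyMeasurableAtFilter
      have hF'x : HasDerivWithinAt F (g x) (Ici x) x :=
        intervalIntegral.integral_hasDerivWithinAt_right (hgi a' x) hmeas
          ((hrc x).mono Ioi_subset_Ici_self)
      have hd : HasDerivWithinAt (fun u => (F u + K) ^ s) (g x * s * (F x + K) ^ (s - 1))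
          (Ici x) x := (hF'x.add_const K).rpow_const (Or.inl hFK)
      have := hd.mono Ioi_subset_Ici_self
      simpa [hG'def, if_neg hFK] using this
  have hle : ∀ x ∈ Ioo a' c, G' x ≤ φ x := by
    intro x hx
    have hφnn : 0 ≤ φ x := by
      have e1 : 0 ≤ g x ^ s := Real.rpow_nonneg (h0 x) s
      have e2 : 0 ≤ (x - a) ^ (s - 1) := Real.rpow_nonneg (by linarith [hx.1]) _
      positivity
    by_cases hFK : F x + K = 0
    · simpa [hG'def, if_pos hFK] using hφnn
    · rcases (h0 x).eq_or_lt with hgx | hgx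
      · simp only [hG'def, if_neg hFK, ← hgx]
        simpa using hφnn
      · have hFKpos : 0 < F x + K := lt_of_le_of_ne (add_nonneg (hFnonneg x hx.1.le) hK)
          (Ne.symm hFK)
        have hxag : 0 < (x - a) * g x := mul_pos (by linarith [hx.1]) hgx
        have hFKge : (x - a) * g x ≤ F x + K := by
          have e1 := hFlow x hx.1.le
          have e2 : (a' - a) * g x ≤ K := by
            have := hg hx.1.le
            nlinarith
          nlinarith
        have hstep : (F x + K) ^ (s - 1) ≤ ((x - a) * g x) ^ (s - 1) :=
          Real.rpow_le_rpow_of_nonpos hxag hFKge (by linarith)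
        simp only [hG'def, if_neg hFK, hφdef]
        calc g x * s * (F x + K) ^ (s - 1) ≤ g x * s * ((x - a) * g x) ^ (s - 1) := by
              exact mul_le_mul_of_nonneg_left hstep (mul_nonneg (h0 x) hs0.le)
          _ = s * (g x ^ s * (x - a) ^ (s - 1)) := by
              rw [Real.mul_rpow (by linarith [hx.1]) (h0 x)]
              have hgg : g x * g x ^ (s - 1) = g x ^ s := by
                rw [Real.rpow_sub_one hgx.ne', mul_div_cancel₀ _ hgx.ne']
              calc g x * s * ((x - a) ^ (s - 1) * g x ^ (s - 1))
                  = s * ((g x * g x ^ (s - 1)) * (x - a) ^ (s - 1)) := by ring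
                _ = s * (g x ^ s * (x - a) ^ (s - 1)) := by rw [hgg]
  have main : G c - G a' ≤ ∫ x in a'..c, φ x :=
    sub_le_integral_of_hasDeriv_right_of_le h2.le hGcont hderiv hφint hle
  have hFa' : F a' = 0 := intervalIntegral.integral_same
  have hGa' : G a' = K ^ s := by simp [hGdef, hFa']
  have hGc : F c ^ s ≤ G c :=
    Real.rpow_le_rpow (hFnonneg c h2.le) (le_add_of_nonneg_right hK) hs0.le
  have hφeq : (∫ x in a'..c, φ x) = s * ∫ x in a'..c, g x ^ s * (x - a) ^ (s - 1) := by
    rw [hφdef]; exact intervalIntegral.integral_const_mul _ _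
  have := main
  rw [hGa', hφeq] at this
  calc (∫ x in a'..c, g x) ^ s = F c ^ s := rfl
    _ ≤ G c := hGc
    _ ≤ K ^ s + s * ∫ x in a'..c, g x ^ s * (x - a) ^ (s - 1) := by linarith
    _ = ((a' - a) * g a') ^ s + s * ∫ x in a'..c, g x ^ s * (x - a) ^ (s - 1) := by rw [hKdef]

lemma lemB {s : ℝ} (hs0 : 0 < s) (hs1 : s < 1) {a : ℝ} {b : EReal} {f : ℝ → ℝ}
    (hf : Measurable f)
    (hpos : ∀ x : ℝ, a < x → (x : EReal) < b → 0 ≤ f x)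
    (hdec : ∀ x y : ℝ, a < x → x ≤ y → (y : EReal) < b → f y ≤ f x)
    {c : ℝ} (hac : a < c) (hcb : (c : EReal) < b) (n : ℕ) :
    (∫ x in Ioo a c, min (f x) n) ^ s ≤
      s * ∫ x in Ioo a c, (min (f x) n) ^ s * (x - a) ^ (s - 1) := by
  set p : ℝ → ℝ := fun x => min (f x) n with hpdef
  have hpmeas : Measurable p := hf.min measurable_const
  have hpn : ∀ x, p x ≤ n := fun x => min_le_right _ _
  have hp0 : ∀ x, a < x → x ≤ c → 0 ≤ p x := by
    intro x hx1 hx2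
    exact le_min (hpos x hx1 (lt_of_le_of_lt (by exact_mod_cast hx2) hcb)) (Nat.cast_nonneg n)
  -- integrability of p on Ioo a c
  have hmeasIoo : MeasurableSet (Ioo a c) := measurableSet_Ioo
  have hpInt : IntegrableOn p (Ioo a c) := by
    refine Integrable.mono' (g := fun _ => (n : ℝ))
      (integrableOn_const measure_Ioo_lt_top.ne) hpmeas.aestronglyMeasurable ?_
    rw [ae_restrict_iff' hmeasIoo]
    refine ae_of_all _ fun x hx => ?_
    rw [Real.norm_eq_abs, abs_of_nonneg (hp0 x hx.1 hx.2.le)]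
    exact hpn x
  -- integrability of the weighted integrand on Ioo a c
  have hwInt0 : IntervalIntegrable (fun x => (x - a) ^ (s - 1)) volume a c := by
    have h := intervalIntegral.intervalIntegrable_rpow' (a := 0) (b := c - a)
      (r := s - 1) (by linarith)
    have := h.comp_sub_right a
    simpa using this
  have hwInt : IntegrableOn (fun x => (x - a) ^ (s - 1)) (Ioo a c) := by
    have := (intervalIntegrable_iff_integrableOn_Ioo_of_le hac.le).1 hwInt0
    exact this
  have hBint : IntegrableOn (fun x => p x ^ s * (x - a) ^ (s - 1)) (Ioo a c) := by
    refine Integrable.mono' (g := fun x => (n : ℝ) ^ s * (x - a) ^ (s - 1))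
      (hwInt.const_mul _) ?_ ?_
    · exact ((hpmeas.pow measurable_const).mul
        ((measurable_id.sub_const a).pow measurable_const)).aestronglyMeasurable
    · rw [ae_restrict_iff' hmeasIoo]
      refine ae_of_all _ fun x hx => ?_
      have e1 : 0 ≤ p x ^ s := Real.rpow_nonneg (hp0 x hx.1 hx.2.le) s
      have e2 : 0 ≤ (x - a) ^ (s - 1) := Real.rpow_nonneg (by linarith [hx.1]) _
      rw [Real.norm_eq_abs, abs_of_nonneg (by positivity)]
      exact mul_le_mul_of_nonneg_right
        (Real.rpow_le_rpow (hp0 x hx.1 hx.2.le) (hpn x) hs0.le) e2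
  set A : ℝ := ∫ x in Ioo a c, p x with hAdef
  set B : ℝ := ∫ x in Ioo a c, p x ^ s * (x - a) ^ (s - 1) with hBdef
  have hA0 : 0 ≤ A :=
    setIntegral_nonneg hmeasIoo fun x hx => hp0 x hx.1 hx.2.le
  have hB0 : 0 ≤ B := by
    refine setIntegral_nonneg hmeasIoo fun x hx => ?_
    have e1 : 0 ≤ p x ^ s := Real.rpow_nonneg (hp0 x hx.1 hx.2.le) s
    have e2 : 0 ≤ (x - a) ^ (s - 1) := Real.rpow_nonneg (by linarith [hx.1]) _
    positivity
  -- the key estimate for each a' ∈ Ioo a c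
  have key : ∀ a' ∈ Ioo a c, A ^ s ≤ 2 * ((a' - a) * n) ^ s + s * B := by
    intro a' ha'
    set q : ℝ → ℝ := fun x => p (max a' (min x c)) with hqdef
    have hclamp_mem : ∀ x : ℝ, a < max a' (min x c) ∧ max a' (min x c) ≤ c := by
      intro x
      constructor
      · exact lt_of_lt_of_le ha'.1 (le_max_left _ _)
      · exact max_le ha'.2.le (min_le_right _ _)
    have hq : Antitone q := by
      intro x y hxy
      have h1 : max a' (min x c) ≤ max a' (min y c) :=
        max_le_max le_rfl (min_le_min (by exact hxy) le_rfl)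
      have h2 := hclamp_mem x
      have h3 := hclamp_mem y
      have hfle : f (max a' (min y c)) ≤ f (max a' (min x c)) :=
        hdec _ _ h2.1 h1 (lt_of_le_of_lt (by exact_mod_cast h3.2) hcb)
      exact min_le_min hfle le_rfl
    have hq0 : ∀ x, 0 ≤ q x := fun x => hp0 _ (hclamp_mem x).1 (hclamp_mem x).2
    set g : ℝ → ℝ := rightLim q with hgdef
    have hg : Antitone g := hq.rightLim
    have hg0 : ∀ x, 0 ≤ g x := fun x => le_trans (hq0 (x + 1)) (hq.le_rightLim (lt_add_one x))
    have hga' : g a' ≤ n := le_trans (hq.rightLim_le le_rfl) (hpn _)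
    have hlemA := lemA hs0 hs1 hg hg0 (antitone_rightLim_continuousWithinAt hq)
      ha'.1 ha'.2
    -- a.e. equality g = p on Ioo a' c
    have haeq : ∀ᵐ x ∂volume.restrict (Ioo a' c), g x = p x := by
      have h2 : ∀ᵐ x ∂volume, ContinuousAt q x := by
        rw [ae_iff]
        exact (hq.countable_not_continuousAt).measure_zero _
      filter_upwards [ae_restrict_mem measurableSet_Ioo, ae_restrict_of_ae h2] with x hx hcont
      have hclamp : max a' (min x c) = x := by
        rw [min_eq_left hx.2.le, max_eq_right hx.1.le]
      have hrl : rightLim q x = q x :=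
        hq.continuousWithinAt_Ioi_iff_rightLim_eq.1 hcont.continuousWithinAt
      rw [hgdef, hrl, hqdef]
      simp only [hclamp]
    have haeq2 : ∀ᵐ x ∂volume.restrict (Ioo a' c),
        g x ^ s * (x - a) ^ (s - 1) = p x ^ s * (x - a) ^ (s - 1) := by
      filter_upwards [haeq] with x hx
      rw [hx]
    -- convert interval integrals to set integrals over Ioo a' c
    have hInt1 : (∫ x in a'..c, g x) = ∫ x in Ioo a' c, p x := by
      rw [intervalIntegral.integral_of_le ha'.2.le, integral_Ioc_eq_integral_Ioo]
      exact integral_congr_ae haeq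
    have hInt2 : (∫ x in a'..c, g x ^ s * (x - a) ^ (s - 1))
        = ∫ x in Ioo a' c, p x ^ s * (x - a) ^ (s - 1) := by
      rw [intervalIntegral.integral_of_le ha'.2.le, integral_Ioc_eq_integral_Ioo]
      exact integral_congr_ae haeq2
    set A' : ℝ := ∫ x in Ioo a' c, p x with hA'def
    have hA'0 : 0 ≤ A' :=
      setIntegral_nonneg measurableSet_Ioo fun x hx => hp0 x (ha'.1.trans hx.1) hx.2.le
    -- decompose A
    have hdisj : Disjoint (Ioc a a') (Ioo a' c) := by
      rw [Set.disjoint_left]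
      rintro x ⟨_, hx2⟩ ⟨hx3, _⟩
      exact absurd hx3 (not_lt.2 hx2)
    have hunion : Ioc a a' ∪ Ioo a' c = Ioo a c := Set.Ioc_union_Ioo_eq_Ioo ha'.1.le ha'.2
    have hsplit : A = (∫ x in Ioc a a', p x) + A' := by
      rw [hAdef, hA'def, ← hunion,
        setIntegral_union hdisj measurableSet_Ioo
          (hpInt.mono_set (by rw [← hunion]; exact Set.subset_union_left))
          (hpInt.mono_set (by rw [← hunion]; exact Set.subset_union_right))]
    have hIoc0 : 0 ≤ ∫ x in Ioc a a', p x :=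
      setIntegral_nonneg measurableSet_Ioc fun x hx => hp0 x hx.1 (hx.2.trans ha'.2.le)
    have hIoc_le : (∫ x in Ioc a a', p x) ≤ (a' - a) * n := by
      have h1 : (∫ x in Ioc a a', p x) ≤ ∫ _x in Ioc a a', (n : ℝ) := by
        refine setIntegral_mono_on
          (hpInt.mono_set (by rw [← hunion]; exact Set.subset_union_left))
          (integrableOn_const measure_Ioc_lt_top.ne) measurableSet_Ioc
          fun x _ => hpn x
      have h2 : (∫ _x in Ioc a a', (n : ℝ)) = (a' - a) * n := by
        rw [setIntegral_const, measureReal_def, Real.volume_Ioc, ENNReal.toReal_ofReal (by linarith [ha'.1])]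
        simp [smul_eq_mul]
      linarith
    -- bound the weighted integral
    have hB'le : (∫ x in Ioo a' c, p x ^ s * (x - a) ^ (s - 1)) ≤ B := by
      refine setIntegral_mono_set hBint ?_ (Set.Ioo_subset_Ioo ha'.1.le le_rfl).eventuallyLE
      filter_upwards [ae_restrict_mem hmeasIoo] with x hx
      have e1 : 0 ≤ p x ^ s := Real.rpow_nonneg (hp0 x hx.1 hx.2.le) s
      have e2 : 0 ≤ (x - a) ^ (s - 1) := Real.rpow_nonneg (by linarith [hx.1]) _
      positivity
    -- combine
    rw [hInt1, hInt2] at hlemA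
    have hA's : A' ^ s ≤ ((a' - a) * n) ^ s + s * B := by
      have h1 : ((a' - a) * g a') ^ s ≤ ((a' - a) * n) ^ s := by
        refine Real.rpow_le_rpow (mul_nonneg (by linarith [ha'.1]) (hg0 a')) ?_ hs0.le
        exact mul_le_mul_of_nonneg_left hga' (by linarith [ha'.1])
      have h2 : s * (∫ x in Ioo a' c, p x ^ s * (x - a) ^ (s - 1)) ≤ s * B :=
        mul_le_mul_of_nonneg_left hB'le hs0.le
      calc A' ^ s ≤ ((a' - a) * g a') ^ s
            + s * ∫ x in Ioo a' c, p x ^ s * (x - a) ^ (s - 1) := hlemA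
        _ ≤ ((a' - a) * n) ^ s + s * B := by linarith
    have hsub : A ^ s ≤ (A - A') ^ s + A' ^ s := by
      have := real_rpow_add_le (x := A - A') (y := A') (by linarith [hIoc0, hsplit])
        hA'0 hs0.le hs1.le
      simpa using this
    have hAA' : (A - A') ^ s ≤ ((a' - a) * n) ^ s := by
      refine Real.rpow_le_rpow (by linarith [hIoc0, hsplit]) (by linarith [hIoc_le, hsplit])
        hs0.le
    calc A ^ s ≤ (A - A') ^ s + A' ^ s := hsub
      _ ≤ ((a' - a) * n) ^ s + (((a' - a) * n) ^ s + s * B) := add_le_add hAA' hA's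
      _ = 2 * ((a' - a) * n) ^ s + s * B := by ring
  -- take the limit a' → a
  have hcont : Tendsto (fun a' : ℝ => 2 * ((a' - a) * n) ^ s + s * B) (𝓝[>] a)
      (𝓝 (s * B)) := by
    have hc : Continuous fun a' : ℝ => 2 * ((a' - a) * n) ^ s + s * B := by
      refine (continuous_const.mul ?_).add continuous_const
      exact (Real.continuous_rpow_const hs0.le).comp
        ((continuous_id.sub continuous_const).mul continuous_const)
    have := (hc.tendsto a).mono_left (nhdsWithin_le_nhds (s := Ioi a))
    simpa [Real.zero_rpow hs0.ne'] using this
  refine ge_of_tendsto hcont ?_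
  filter_upwards [Ioo_mem_nhdsGT_of_mem (Set.left_mem_Ico.2 hac)] with a' ha'
  exact key a' ha'

lemma lemC {s : ℝ} (hs0 : 0 < s) (hs1 : s < 1) {a : ℝ} {b : EReal} {f : ℝ → ℝ}
    (hf : Measurable f)
    (hpos : ∀ x : ℝ, a < x → (x : EReal) < b → 0 ≤ f x)
    (hdec : ∀ x y : ℝ, a < x → x ≤ y → (y : EReal) < b → f y ≤ f x)
    {c : ℝ} (hac : a < c) (hcb : (c : EReal) < b) (n : ℕ) :
    (∫⁻ x in Ioo a c, ENNReal.ofReal (min (f x) n)) ^ s ≤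
      ENNReal.ofReal s *
        ∫⁻ x in {x : ℝ | a < x ∧ (x : EReal) < b},
          ENNReal.ofReal (f x ^ s * (x - a) ^ (s - 1)) := by
  set p : ℝ → ℝ := fun x => min (f x) n with hpdef
  have hpmeas : Measurable p := hf.min measurable_const
  have hpn : ∀ x, p x ≤ n := fun x => min_le_right _ _
  have hp0 : ∀ x, a < x → x ≤ c → 0 ≤ p x := by
    intro x hx1 hx2
    exact le_min (hpos x hx1 (lt_of_le_of_lt (by exact_mod_cast hx2) hcb)) (Nat.cast_nonneg n)
  have hmeasIoo : MeasurableSet (Ioo a c) := measurableSet_Ioo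
  have hpInt : IntegrableOn p (Ioo a c) := by
    refine Integrable.mono' (g := fun _ => (n : ℝ))
      (integrableOn_const measure_Ioo_lt_top.ne) hpmeas.aestronglyMeasurable ?_
    rw [ae_restrict_iff' hmeasIoo]
    refine ae_of_all _ fun x hx => ?_
    rw [Real.norm_eq_abs, abs_of_nonneg (hp0 x hx.1 hx.2.le)]
    exact hpn x
  have hwInt0 : IntervalIntegrable (fun x => (x - a) ^ (s - 1)) volume a c := by
    have h := intervalIntegral.intervalIntegrable_rpow' (a := 0) (b := c - a)
      (r := s - 1) (by linarith)
    have := h.comp_sub_right a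
    simpa using this
  have hwInt : IntegrableOn (fun x => (x - a) ^ (s - 1)) (Ioo a c) :=
    (intervalIntegrable_iff_integrableOn_Ioo_of_le hac.le).1 hwInt0
  have hBint : IntegrableOn (fun x => p x ^ s * (x - a) ^ (s - 1)) (Ioo a c) := by
    refine Integrable.mono' (g := fun x => (n : ℝ) ^ s * (x - a) ^ (s - 1))
      (hwInt.const_mul _) ?_ ?_
    · exact ((hpmeas.pow measurable_const).mul
        ((measurable_id.sub_const a).pow measurable_const)).aestronglyMeasurable
    · rw [ae_restrict_iff' hmeasIoo]
      refine ae_of_all _ fun x hx => ?_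
      have e1 : 0 ≤ p x ^ s := Real.rpow_nonneg (hp0 x hx.1 hx.2.le) s
      have e2 : 0 ≤ (x - a) ^ (s - 1) := Real.rpow_nonneg (by linarith [hx.1]) _
      rw [Real.norm_eq_abs, abs_of_nonneg (by positivity)]
      exact mul_le_mul_of_nonneg_right
        (Real.rpow_le_rpow (hp0 x hx.1 hx.2.le) (hpn x) hs0.le) e2
  have hpnn : 0 ≤ᵐ[volume.restrict (Ioo a c)] p := by
    filter_upwards [ae_restrict_mem hmeasIoo] with x hx
    exact hp0 x hx.1 hx.2.le
  have hBnn : 0 ≤ᵐ[volume.restrict (Ioo a c)] fun x => p x ^ s * (x - a) ^ (s - 1) := by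
    filter_upwards [ae_restrict_mem hmeasIoo] with x hx
    have e1 : 0 ≤ p x ^ s := Real.rpow_nonneg (hp0 x hx.1 hx.2.le) s
    have e2 : 0 ≤ (x - a) ^ (s - 1) := Real.rpow_nonneg (by linarith [hx.1]) _
    positivity
  have hA0 : 0 ≤ ∫ x in Ioo a c, p x :=
    setIntegral_nonneg hmeasIoo fun x hx => hp0 x hx.1 hx.2.le
  have step1 : (∫⁻ x in Ioo a c, ENNReal.ofReal (p x)) =
      ENNReal.ofReal (∫ x in Ioo a c, p x) :=
    (ofReal_integral_eq_lintegral_ofReal hpInt hpnn).symm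
  have step5 : ENNReal.ofReal (∫ x in Ioo a c, p x ^ s * (x - a) ^ (s - 1)) =
      ∫⁻ x in Ioo a c, ENNReal.ofReal (p x ^ s * (x - a) ^ (s - 1)) :=
    ofReal_integral_eq_lintegral_ofReal hBint hBnn
  have step6 : (∫⁻ x in Ioo a c, ENNReal.ofReal (p x ^ s * (x - a) ^ (s - 1))) ≤
      ∫⁻ x in Ioo a c, ENNReal.ofReal (f x ^ s * (x - a) ^ (s - 1)) := by
    refine lintegral_mono_ae ?_
    filter_upwards [ae_restrict_mem hmeasIoo] with x hx
    refine ENNReal.ofReal_le_ofReal ?_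
    have e2 : 0 ≤ (x - a) ^ (s - 1) := Real.rpow_nonneg (by linarith [hx.1]) _
    exact mul_le_mul_of_nonneg_right
      (Real.rpow_le_rpow (hp0 x hx.1 hx.2.le) (min_le_left _ _) hs0.le) e2
  have step7 : (∫⁻ x in Ioo a c, ENNReal.ofReal (f x ^ s * (x - a) ^ (s - 1))) ≤
      ∫⁻ x in {x : ℝ | a < x ∧ (x : EReal) < b},
        ENNReal.ofReal (f x ^ s * (x - a) ^ (s - 1)) := by
    refine lintegral_mono_set ?_
    intro x hx
    exact ⟨hx.1, lt_trans (by exact_mod_cast hx.2) hcb⟩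
  calc (∫⁻ x in Ioo a c, ENNReal.ofReal (p x)) ^ s
      = ENNReal.ofReal (∫ x in Ioo a c, p x) ^ s := by rw [step1]
    _ = ENNReal.ofReal ((∫ x in Ioo a c, p x) ^ s) :=
        ENNReal.ofReal_rpow_of_nonneg hA0 hs0.le
    _ ≤ ENNReal.ofReal (s * ∫ x in Ioo a c, p x ^ s * (x - a) ^ (s - 1)) :=
        ENNReal.ofReal_le_ofReal (lemB hs0 hs1 hf hpos hdec hac hcb n)
    _ = ENNReal.ofReal s *
          ENNReal.ofReal (∫ x in Ioo a c, p x ^ s * (x - a) ^ (s - 1)) :=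
        ENNReal.ofReal_mul hs0.le
    _ ≤ ENNReal.ofReal s *
          ∫⁻ x in {x : ℝ | a < x ∧ (x : EReal) < b},
            ENNReal.ofReal (f x ^ s * (x - a) ^ (s - 1)) := by
        rw [step5]
        exact mul_le_mul_right (step6.trans step7) _

lemma main_aux {s : ℝ} (hs0 : 0 < s) (hs1 : s < 1) {a : ℝ} {b : EReal} {f : ℝ → ℝ}
    (hf : Measurable f)
    (hpos : ∀ x : ℝ, a < x → (x : EReal) < b → 0 ≤ f x)
    (hdec : ∀ x y : ℝ, a < x → x ≤ y → (y : EReal) < b → f y ≤ f x)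
    (c : ℕ → ℝ) (hc1 : ∀ n, a < c n) (hcb : ∀ n, (c n : EReal) < b)
    (hmono : Monotone c) (hcov : ∀ x : ℝ, a < x → (x : EReal) < b → ∃ n, x < c n) :
    (∫⁻ x in {x : ℝ | a < x ∧ (x : EReal) < b}, ENNReal.ofReal (f x)) ^ s ≤
      ENNReal.ofReal s *
        ∫⁻ x in {x : ℝ | a < x ∧ (x : EReal) < b},
          ENNReal.ofReal (f x ^ s * (x - a) ^ (s - 1)) := by
  set S : Set ℝ := {x : ℝ | a < x ∧ (x : EReal) < b} with hSdef
  set R : ℝ≥0∞ := ENNReal.ofReal s *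
    ∫⁻ x in S, ENNReal.ofReal (f x ^ s * (x - a) ^ (s - 1)) with hRdef
  have hIooS : ∀ n, Ioo a (c n) ⊆ S := by
    intro n x hx
    exact ⟨hx.1, lt_trans (by exact_mod_cast hx.2) (hcb n)⟩
  have hSunion : S = ⋃ n, Ioo a (c n) := by
    ext x
    constructor
    · rintro ⟨hx1, hx2⟩
      obtain ⟨n, hn⟩ := hcov x hx1 hx2
      exact mem_iUnion.2 ⟨n, hx1, hn⟩
    · rintro hx
      obtain ⟨n, hn⟩ := mem_iUnion.1 hx
      exact hIooS n hn
  have hSmeas : MeasurableSet S := by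
    rw [hSunion]; exact MeasurableSet.iUnion fun n => measurableSet_Ioo
  set F : ℕ → ℝ → ℝ≥0∞ := fun n =>
    (Ioo a (c n)).indicator (fun x => ENNReal.ofReal (min (f x) n)) with hFdef
  have hFmeas : ∀ n, Measurable (F n) := fun n =>
    ((hf.min measurable_const).ennreal_ofReal).indicator measurableSet_Ioo
  have hFmono : Monotone F := by
    intro m k hmk x
    by_cases hx : x ∈ Ioo a (c m)
    · simp only [hFdef]
      rw [indicator_of_mem hx, indicator_of_mem (Ioo_subset_Ioo le_rfl (hmono hmk) hx)]
      exact ENNReal.ofReal_le_ofReal (le_min (min_le_left _ _)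
        ((min_le_right _ _).trans (by exact_mod_cast Nat.cast_le.2 hmk)))
    · simp only [hFdef]; rw [indicator_of_notMem hx]
      exact zero_le
  have hFsup : ∀ x, (⨆ n, F n x) = S.indicator (fun x => ENNReal.ofReal (f x)) x := by
    intro x
    by_cases hx : x ∈ S
    · rw [indicator_of_mem hx]
      obtain ⟨n₀, hn₀⟩ := hcov x hx.1 hx.2
      apply le_antisymm
      · refine iSup_le fun n => ?_
        simp only [hFdef]
        by_cases hxn : x ∈ Ioo a (c n)
        · rw [indicator_of_mem hxn]
          exact ENNReal.ofReal_le_ofReal (min_le_left _ _)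
        · rw [indicator_of_notMem hxn]; exact zero_le
      · set m : ℕ := max n₀ ⌈f x⌉₊ with hmdef
        have hxm : x ∈ Ioo a (c m) := ⟨hx.1, lt_of_lt_of_le hn₀ (hmono (le_max_left _ _))⟩
        have hfm : f x ≤ m := le_trans (Nat.le_ceil _) (by exact_mod_cast le_max_right n₀ _)
        have : F m x = ENNReal.ofReal (f x) := by
          simp only [hFdef]; rw [indicator_of_mem hxm, min_eq_left hfm]
        exact le_trans (le_of_eq this.symm) (le_iSup (fun n => F n x) m)
    · rw [indicator_of_notMem hx]
      simp only [hFdef]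
      refine le_antisymm (iSup_le fun n => ?_) zero_le
      rw [indicator_of_notMem (fun h => hx (hIooS n h))]
  have hLHS : (∫⁻ x in S, ENNReal.ofReal (f x)) =
      ⨆ n, ∫⁻ x in Ioo a (c n), ENNReal.ofReal (min (f x) n) := by
    rw [← lintegral_indicator hSmeas]
    have : ∀ n, (∫⁻ x in Ioo a (c n), ENNReal.ofReal (min (f x) n)) = ∫⁻ x, F n x := by
      intro n
      simp only [hFdef]; rw [lintegral_indicator measurableSet_Ioo]
    simp_rw [this]
    rw [← lintegral_iSup hFmeas hFmono]
    congr 1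
    ext x
    exact (hFsup x).symm
  rw [hLHS]
  have hbound : ∀ n, (∫⁻ x in Ioo a (c n), ENNReal.ofReal (min (f x) n)) ≤ R ^ (1/s) := by
    intro n
    have h := lemC hs0 hs1 hf hpos hdec (hc1 n) (hcb n) n
    have h2 : ((∫⁻ x in Ioo a (c n), ENNReal.ofReal (min (f x) n)) ^ s) ^ (1/s) ≤
        R ^ (1/s) := ENNReal.rpow_le_rpow h (by positivity)
    rwa [← ENNReal.rpow_mul, mul_one_div, div_self hs0.ne', ENNReal.rpow_one] at h2
  have hsup_le : (⨆ n, ∫⁻ x in Ioo a (c n), ENNReal.ofReal (min (f x) n)) ≤ R ^ (1/s) :=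
    iSup_le hbound
  have := ENNReal.rpow_le_rpow hsup_le hs0.le
  rwa [← ENNReal.rpow_mul, one_div, inv_mul_cancel₀ hs0.ne', ENNReal.rpow_one] at this

/-- Lemma 2: for `0 < s < 1`, `-∞ < a < b ≤ ∞` and `f` nonnegative and
nonincreasing on `(a,b)`, `(∫_a^b f)^s ≤ s ∫_a^b f(x)^s (x-a)^{s-1} dx`,
both sides interpreted in `[0,∞]`. -/
theorem integral_pow_le_decreasing
    (s : ℝ) (hs0 : 0 < s) (hs1 : s < 1) (a : ℝ) (b : EReal) (hab : (a : EReal) < b)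
    (f : ℝ → ℝ) (hf : Measurable f)
    (hpos : ∀ x : ℝ, a < x → (x : EReal) < b → 0 ≤ f x)
    (hdec : ∀ x y : ℝ, a < x → x ≤ y → (y : EReal) < b → f y ≤ f x) :
    (∫⁻ x in {x : ℝ | a < x ∧ (x : EReal) < b}, ENNReal.ofReal (f x)) ^ s ≤
      ENNReal.ofReal s *
        ∫⁻ x in {x : ℝ | a < x ∧ (x : EReal) < b},
          ENNReal.ofReal (f x ^ s * (x - a) ^ (s - 1)) := by
  rcases eq_or_ne b ⊤ with rfl | hbt
  · refine main_aux hs0 hs1 hf hpos hdec (fun n => a + n + 1) ?_ ?_ ?_ ?_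
    · intro n
      have : (0:ℝ) ≤ n := Nat.cast_nonneg n
      show a < a + n + 1
      linarith
    · intro n
      exact EReal.coe_lt_top _
    · intro m k hmk
      have : (m:ℝ) ≤ k := Nat.cast_le.2 hmk
      show a + m + 1 ≤ a + k + 1
      linarith
    · intro x hx1 _
      obtain ⟨n, hn⟩ := exists_nat_gt (x - a - 1)
      exact ⟨n, show x < a + n + 1 by linarith⟩
  · have hbb : b ≠ ⊥ := by
      intro h
      rw [h] at hab
      exact absurd hab (by simp)
    lift b to ℝ using ⟨hbt, hbb⟩ with b'
    have hab' : a < b' := EReal.coe_lt_coe_iff.1 hab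
    refine main_aux hs0 hs1 hf hpos hdec (fun n => b' - (b' - a) / (n + 2)) ?_ ?_ ?_ ?_
    · intro n
      have h1 : (0:ℝ) < (n:ℝ) + 2 := by positivity
      have h2 : (b' - a) / (n + 2) < b' - a := div_lt_self (by linarith) (by
        have : (0:ℝ) ≤ n := Nat.cast_nonneg n
        linarith)
      show a < b' - (b' - a) / (n + 2)
      linarith
    · intro n
      refine EReal.coe_lt_coe_iff.2 ?_
      have h1 : (0:ℝ) < (b' - a) / (n + 2) := div_pos (by linarith) (by positivity)
      show b' - (b' - a) / (n + 2) < b'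
      linarith
    · intro m k hmk
      have h1 : (0:ℝ) < (m:ℝ) + 2 := by positivity
      have h2 : ((m:ℝ) + 2) ≤ (k:ℝ) + 2 := by
        have : (m:ℝ) ≤ k := Nat.cast_le.2 hmk
        linarith
      show b' - (b' - a) / (m + 2) ≤ b' - (b' - a) / (k + 2)
      have := div_le_div_of_nonneg_left (by linarith : (0:ℝ) ≤ b' - a) h1 h2
      linarith
    · intro x hx1 hx2
      have hxb : x < b' := EReal.coe_lt_coe_iff.1 hx2
      obtain ⟨n, hn⟩ := exists_nat_gt ((b' - a) / (b' - x))
      refine ⟨n, ?_⟩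
      have hbx : (0:ℝ) < b' - x := by linarith
      have h1 : (b' - a) < ((b' - a) / (b' - x)) * (b' - x) + (b' - x) := by
        rw [div_mul_cancel₀ _ hbx.ne']
        linarith
      have h2 : (0:ℝ) < (n:ℝ) + 2 := by positivity
      have h3 : (b' - a) / (n + 2) < b' - x := by
        rw [div_lt_iff₀ h2]
        nlinarith
      show x < b' - (b' - a) / (n + 2)
      linarith
end

section
/- (Lemma 3.) Let 0 < s < 1, let −∞ ≤ a < b < ∞, and let f be a nonnegative, increasing (nondecreasing) function on (a, b). Then (∫_a^b f(x) dx)^s ≤ s ∫_a^b f(x)^s (b − x)^{s−1} dx. -/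
open MeasureTheory
open Set
open scoped ENNReal NNReal

lemma my_rpow_anti {x y : ℝ≥0∞} (hx : 0 < x) (hxy : x ≤ y) {z : ℝ} (hz : z ≤ 0) :
    y ^ z ≤ x ^ z := by
  rw [← neg_neg z, ENNReal.rpow_neg y, ENNReal.rpow_neg x]
  exact ENNReal.inv_le_inv.2 (ENNReal.rpow_le_rpow hxy (neg_nonneg.2 hz))

lemma my_tail_pos (s : ℝ) (hs0 : 0 < s) (hs1 : s < 1) {c : ℝ} (hc : 0 < c) :
    ∫⁻ u in Ioi c, ENNReal.ofReal ((1 - s) * u ^ (s - 2)) = ENNReal.ofReal c ^ (s - 1) := by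
  have hint : IntegrableOn (fun u : ℝ => (1 - s) * u ^ (s - 2)) (Ioi c) :=
    (integrableOn_Ioi_rpow_of_lt (by linarith) hc).const_mul _
  rw [← ofReal_integral_eq_lintegral_ofReal hint ?_]
  · rw [MeasureTheory.integral_const_mul, integral_Ioi_rpow_of_lt (by linarith) hc]
    rw [ENNReal.ofReal_rpow_of_pos hc]
    congr 1
    have h2 : s - 2 + 1 = s - 1 := by ring
    rw [h2]
    have hne : s - 1 ≠ 0 := by linarith
    field_simp
    ring
  · filter_upwards [ae_restrict_mem measurableSet_Ioi] with u hu
    have hu0 : (0:ℝ) < u := lt_trans hc hu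
    exact mul_nonneg (by linarith) (Real.rpow_nonneg hu0.le _)

lemma my_tail (s : ℝ) (hs0 : 0 < s) (hs1 : s < 1) {c : ℝ} (hc : 0 ≤ c) :
    ∫⁻ u in Ioi c, ENNReal.ofReal ((1 - s) * u ^ (s - 2)) = ENNReal.ofReal c ^ (s - 1) := by
  rcases hc.eq_or_lt with h0 | hc
  · -- c = 0 : both sides ⊤
    subst h0
    rw [ENNReal.ofReal_zero, ENNReal.zero_rpow_of_neg (by linarith)]
    rw [eq_top_iff]
    refine ENNReal.le_of_forall_nnreal_lt (fun r _ => ?_)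
    set M : ℝ := max 1 r with hM
    have hM1 : (1:ℝ) ≤ M := le_max_left _ _
    have hMpos : (0:ℝ) < M := by linarith
    set c' : ℝ := M ^ (1 / (s - 1)) with hc'
    have hc'pos : 0 < c' := Real.rpow_pos_of_pos hMpos _
    have hkey : ∫⁻ u in Ioi c', ENNReal.ofReal ((1 - s) * u ^ (s - 2))
        = ENNReal.ofReal c' ^ (s - 1) := my_tail_pos s hs0 hs1 hc'pos
    have hval : ENNReal.ofReal c' ^ (s - 1) = ENNReal.ofReal M := by
      rw [ENNReal.ofReal_rpow_of_pos hc'pos, hc', ← Real.rpow_mul hMpos.le,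
        one_div_mul_cancel (by linarith : s - 1 ≠ 0), Real.rpow_one]
    calc (r : ℝ≥0∞) ≤ ENNReal.ofReal M := by
          rw [← ENNReal.ofReal_coe_nnreal]
          exact ENNReal.ofReal_le_ofReal (le_max_right _ _)
      _ = ∫⁻ u in Ioi c', ENNReal.ofReal ((1 - s) * u ^ (s - 2)) := by rw [hkey, hval]
      _ ≤ _ := lintegral_mono_set (Ioi_subset_Ioi hc'pos.le)
  · exact my_tail_pos s hs0 hs1 hc

lemma my_oned (s : ℝ) (hs0 : 0 < s) (hs1 : s < 1) (I : ℝ≥0∞) :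
    I ^ s ≤ ENNReal.ofReal s *
      ∫⁻ u in Ioi (0:ℝ), ENNReal.ofReal ((1 - s) * u ^ (s - 2)) * min (ENNReal.ofReal u) I := by
  have hmeas : Measurable fun u : ℝ => ENNReal.ofReal ((1 - s) * u ^ (s - 2)) * min (ENNReal.ofReal u) I := by
    apply Measurable.mul
    · exact ((measurable_id.pow measurable_const).const_mul (1 - s)).ennreal_ofReal
    · exact Measurable.min measurable_id.ennreal_ofReal measurable_const
  rcases eq_or_ne I 0 with rfl | hI0
  · rw [ENNReal.zero_rpow_of_pos hs0]; exact zero_le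
  rcases eq_or_ne I ⊤ with rfl | hItop
  · -- I = ⊤ : RHS is ⊤
    rw [ENNReal.top_rpow_of_pos hs0, top_le_iff, ENNReal.mul_eq_top]
    left
    constructor
    · simpa using hs0
    rw [eq_top_iff]
    refine ENNReal.le_of_forall_nnreal_lt (fun r _ => ?_)
    set c' : ℝ := (1 - s) * 2 ^ (s - 2) with hc'
    have hc'pos : 0 < c' := by
      apply mul_pos (by linarith)
      exact Real.rpow_pos_of_pos (by norm_num) _
    set K : ℝ := max 1 ((r / c') ^ (1 / s)) with hK
    have hK1 : (1:ℝ) ≤ K := le_max_left _ _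
    have hKpos : (0:ℝ) < K := by linarith
    have hrc : (0:ℝ) ≤ (r:ℝ) / c' := by positivity
    have hKs : (r:ℝ) ≤ c' * K ^ s := by
      have h3 : ((r:ℝ) / c') ≤ K ^ s := by
        calc ((r:ℝ)/c') = (((r:ℝ)/c') ^ (1/s)) ^ s := by
              rw [← Real.rpow_mul hrc, one_div_mul_cancel hs0.ne', Real.rpow_one]
          _ ≤ K ^ s := Real.rpow_le_rpow (Real.rpow_nonneg hrc _) (le_max_right _ _) hs0.le
      calc (r:ℝ) = c' * ((r:ℝ) / c') := by field_simp
        _ ≤ c' * K ^ s := mul_le_mul_of_nonneg_left h3 hc'pos.le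
    calc (r : ℝ≥0∞) = ENNReal.ofReal r := ENNReal.ofReal_coe_nnreal.symm
      _ ≤ ENNReal.ofReal (c' * K ^ s) := ENNReal.ofReal_le_ofReal hKs
      _ ≤ ∫⁻ u in Ioo K (2 * K), ENNReal.ofReal ((1 - s) * u ^ (s - 2)) * min (ENNReal.ofReal u) ⊤ := by
          have hvol : volume (Ioo K (2 * K)) = ENNReal.ofReal K := by
            rw [Real.volume_Ioo]; congr 1; ring
          have hconst : ENNReal.ofReal (c' * K ^ s) =
              (ENNReal.ofReal ((1 - s) * (2 * K) ^ (s - 2)) * ENNReal.ofReal K) * volume (Ioo K (2 * K)) := by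
            have hA : (0:ℝ) ≤ (1 - s) * (2 * K) ^ (s - 2) :=
              mul_nonneg (by linarith) (Real.rpow_nonneg (by positivity) _)
            rw [hvol, ← ENNReal.ofReal_mul hA, ← ENNReal.ofReal_mul (mul_nonneg hA hKpos.le)]
            congr 1
            rw [Real.mul_rpow (by norm_num) hKpos.le]
            have hKK : K ^ (s-2) * K * K = K ^ s := by
              rw [mul_assoc, show K * K = K ^ (2:ℝ) by
                rw [show (2:ℝ) = ((2:ℕ):ℝ) by norm_num, Real.rpow_natCast]; ring]
              rw [← Real.rpow_add hKpos]; norm_num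
            rw [← hKK, hc']; ring
          rw [hconst, ← setLIntegral_const]
          refine setLIntegral_mono hmeas (fun u hu => ?_)
          have hu0 : 0 < u := lt_trans hKpos hu.1
          rw [min_eq_left le_top]
          refine mul_le_mul ?_ (ENNReal.ofReal_le_ofReal hu.1.le) zero_le zero_le
          apply ENNReal.ofReal_le_ofReal
          apply mul_le_mul_of_nonneg_left ?_ (by linarith : (0:ℝ) ≤ 1 - s)
          exact Real.rpow_le_rpow_of_nonpos hu0 hu.2.le (by linarith)
      _ ≤ _ := lintegral_mono_set (fun u hu => lt_trans hKpos hu.1)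
  · -- 0 < I < ⊤
    set I₀ : ℝ := I.toReal with hI₀def
    have hI₀pos : 0 < I₀ := ENNReal.toReal_pos hI0 hItop
    have hIof : ENNReal.ofReal I₀ = I := ENNReal.ofReal_toReal hItop
    have hcmeas : Measurable fun u : ℝ => ENNReal.ofReal ((1 - s) * u ^ (s - 2)) :=
      ((measurable_id.pow measurable_const).const_mul (1 - s)).ennreal_ofReal
    -- part A
    have hA : ∫⁻ u in Ioo 0 I₀, ENNReal.ofReal ((1 - s) * u ^ (s - 2)) * min (ENNReal.ofReal u) I
        = ENNReal.ofReal ((1 - s) * (I₀ ^ s / s)) := by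
      have hcongr : ∫⁻ u in Ioo 0 I₀, ENNReal.ofReal ((1 - s) * u ^ (s - 2)) * min (ENNReal.ofReal u) I
          = ∫⁻ u in Ioo 0 I₀, ENNReal.ofReal ((1 - s) * u ^ (s - 1)) := by
        refine setLIntegral_congr_fun measurableSet_Ioo (fun u hu => ?_)
        have hu0 : (0:ℝ) < u := hu.1
        have hmin : min (ENNReal.ofReal u) I = ENNReal.ofReal u := by
          rw [min_eq_left]
          rw [← hIof]
          exact ENNReal.ofReal_le_ofReal hu.2.le
        rw [hmin, ← ENNReal.ofReal_mul (mul_nonneg (by linarith) (Real.rpow_nonneg hu0.le _))]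
        congr 1
        rw [mul_assoc]
        congr 1
        nth_rewrite 2 [show u = u ^ (1:ℝ) by rw [Real.rpow_one]]
        rw [← Real.rpow_add hu0]
        congr 1
        ring
      rw [hcongr]
      have hint : IntegrableOn (fun u : ℝ => (1 - s) * u ^ (s - 1)) (Ioo 0 I₀) := by
        have h1 : IntervalIntegrable (fun u : ℝ => u ^ (s - 1)) volume 0 I₀ :=
          intervalIntegral.intervalIntegrable_rpow' (by linarith)
        rw [intervalIntegrable_iff_integrableOn_Ioo_of_le hI₀pos.le] at h1
        exact h1.const_mul _
      rw [← ofReal_integral_eq_lintegral_ofReal hint ?_]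
      · congr 1
        rw [MeasureTheory.integral_const_mul]
        congr 1
        rw [← integral_Ioc_eq_integral_Ioo, ← intervalIntegral.integral_of_le hI₀pos.le,
          integral_rpow (Or.inl (by linarith))]
        rw [Real.zero_rpow (by linarith : s - 1 + 1 ≠ 0)]
        rw [show s - 1 + 1 = s by ring]
        ring
      · filter_upwards [ae_restrict_mem measurableSet_Ioo] with u hu
        exact mul_nonneg (by linarith) (Real.rpow_nonneg hu.1.le _)
    -- part B
    have hB : ∫⁻ u in Ioi I₀, ENNReal.ofReal ((1 - s) * u ^ (s - 2)) * min (ENNReal.ofReal u) I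
        = ENNReal.ofReal (I₀ ^ (s - 1)) * I := by
      have hcongr : ∫⁻ u in Ioi I₀, ENNReal.ofReal ((1 - s) * u ^ (s - 2)) * min (ENNReal.ofReal u) I
          = ∫⁻ u in Ioi I₀, ENNReal.ofReal ((1 - s) * u ^ (s - 2)) * I := by
        refine setLIntegral_congr_fun measurableSet_Ioi (fun u hu => ?_)
        congr 1
        rw [min_eq_right]
        rw [← hIof]
        exact ENNReal.ofReal_le_ofReal (le_of_lt hu)
      rw [hcongr, lintegral_mul_const _ hcmeas, my_tail_pos s hs0 hs1 hI₀pos,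
        ENNReal.ofReal_rpow_of_pos hI₀pos]
    -- assemble
    have hsum : ENNReal.ofReal (I₀ ^ s) ≤ ENNReal.ofReal s *
        ∫⁻ u in Ioi (0:ℝ), ENNReal.ofReal ((1 - s) * u ^ (s - 2)) * min (ENNReal.ofReal u) I := by
      have hdisj : Disjoint (Ioo (0:ℝ) I₀) (Ioi I₀) :=
        Set.disjoint_left.2 (fun u hu hu' => absurd hu.2 (not_lt.2 (le_of_lt hu')))
      have hunion : ∫⁻ u in Ioo 0 I₀ ∪ Ioi I₀,
            ENNReal.ofReal ((1 - s) * u ^ (s - 2)) * min (ENNReal.ofReal u) I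
          ≤ ∫⁻ u in Ioi (0:ℝ), ENNReal.ofReal ((1 - s) * u ^ (s - 2)) * min (ENNReal.ofReal u) I := by
        refine lintegral_mono_set (fun u hu => ?_)
        rcases hu with hu | hu
        · exact hu.1
        · exact lt_trans hI₀pos hu
      rw [lintegral_union measurableSet_Ioi hdisj, hA, hB] at hunion
      calc ENNReal.ofReal (I₀ ^ s)
          = ENNReal.ofReal s * (ENNReal.ofReal ((1 - s) * (I₀ ^ s / s)) + ENNReal.ofReal (I₀ ^ (s - 1)) * I) := by
            rw [← hIof, ← ENNReal.ofReal_mul (Real.rpow_nonneg hI₀pos.le _),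
              ← ENNReal.ofReal_add (mul_nonneg (by linarith) (by positivity)) (mul_nonneg (Real.rpow_nonneg hI₀pos.le _) hI₀pos.le),
              ← ENNReal.ofReal_mul hs0.le]
            congr 1
            rw [show I₀ ^ (s-1) * I₀ = I₀ ^ s by
              nth_rewrite 2 [show I₀ = I₀ ^ (1:ℝ) by rw [Real.rpow_one]]
              rw [← Real.rpow_add hI₀pos]; norm_num]
            field_simp
            ring
        _ ≤ _ := mul_le_mul_right hunion _
    calc I ^ s = ENNReal.ofReal (I₀ ^ s) := by rw [← hIof, ENNReal.ofReal_rpow_of_pos hI₀pos]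
      _ ≤ _ := hsum

set_option maxHeartbeats 2000000 in
lemma my_bounded (s : ℝ) (hs0 : 0 < s) (hs1 : s < 1) (b : ℝ) (S : Set ℝ)
    (hSm : MeasurableSet S) (hSb : ∀ x ∈ S, x < b) (hSup : ∀ x ∈ S, Set.Ioo x b ⊆ S)
    (f : ℝ → ℝ) (hf : Measurable f) (n : ℝ)
    (hf0 : ∀ x, 0 ≤ f x) (hfn : ∀ x, f x ≤ n)
    (hmono : ∀ x ∈ S, ∀ y ∈ S, x ≤ y → f x ≤ f y) :
    (∫⁻ x in S, ENNReal.ofReal (f x)) ^ s ≤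
      ENNReal.ofReal s * ∫⁻ x in S, ENNReal.ofReal (f x ^ s * (b - x) ^ (s - 1)) := by
  have hn : (0:ℝ) ≤ n := le_trans (hf0 0) (hfn 0)
  set g : ℝ → ℝ≥0∞ := fun x => ENNReal.ofReal (f x) with hg
  have hgmeas : Measurable g := hf.ennreal_ofReal
  have hgn : ∀ x, g x ≤ ENNReal.ofReal n := fun x => ENNReal.ofReal_le_ofReal (hfn x)
  set H : ℝ → ℝ≥0∞ := fun t => ∫⁻ y in Ioo t b, g y with hH
  set I : ℝ≥0∞ := ∫⁻ x in S, g x with hI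
  set J : ℝ≥0∞ := ∫⁻ x in S, ENNReal.ofReal (f x ^ s * (b - x) ^ (s - 1)) with hJ
  -- basic facts about H
  have hHle : ∀ t, H t ≤ ENNReal.ofReal n * ENNReal.ofReal (b - t) := by
    intro t
    calc H t ≤ ∫⁻ _ in Ioo t b, ENNReal.ofReal n := lintegral_mono (fun y => hgn y)
      _ = ENNReal.ofReal n * volume (Ioo t b) := setLIntegral_const _ _
      _ = _ := by rw [Real.volume_Ioo]
  have hHtop : ∀ t, H t ≠ ⊤ := fun t =>
    ne_top_of_le_ne_top (ENNReal.mul_ne_top ENNReal.ofReal_ne_top ENNReal.ofReal_ne_top) (hHle t)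
  have hHanti : Antitone H := fun x y hxy =>
    lintegral_mono_set (fun z hz => ⟨lt_of_le_of_lt hxy hz.1, hz.2⟩)
  have hHmeas : Measurable H := hHanti.measurable
  have hsplit : ∀ x e, x ≤ e → e < b → H x ≤ ENNReal.ofReal n * ENNReal.ofReal (e - x) + H e := by
    intro x e hxe heb
    have hun : Ioo x b = Ioc x e ∪ Ioo e b := by
      ext z
      simp only [mem_Ioo, mem_Ioc, mem_union]
      constructor
      · rintro ⟨h1, h2⟩
        rcases le_or_gt z e with h | h
        · exact Or.inl ⟨h1, h⟩
        · exact Or.inr ⟨h, h2⟩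
      · rintro (⟨h1, h2⟩ | ⟨h1, h2⟩)
        · exact ⟨h1, lt_of_le_of_lt h2 heb⟩
        · exact ⟨lt_of_le_of_lt hxe h1, h2⟩
    have hdisj : Disjoint (Ioc x e) (Ioo e b) :=
      Set.disjoint_left.2 (fun z hz hz' => absurd hz.2 (not_le.2 hz'.1))
    have hIoc : ∫⁻ y in Ioc x e, g y ≤ ENNReal.ofReal n * ENNReal.ofReal (e - x) := by
      calc ∫⁻ y in Ioc x e, g y ≤ ∫⁻ _ in Ioc x e, ENNReal.ofReal n :=
            lintegral_mono (fun y => hgn y)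
        _ = ENNReal.ofReal n * volume (Ioc x e) := setLIntegral_const _ _
        _ = _ := by rw [Real.volume_Ioc]
    calc H x = ∫⁻ y in Ioc x e ∪ Ioo e b, g y := by rw [hH]; simp only; rw [hun]
      _ = (∫⁻ y in Ioc x e, g y) + ∫⁻ y in Ioo e b, g y :=
          lintegral_union measurableSet_Ioo hdisj
      _ ≤ _ := add_le_add hIoc (le_refl _)
  have hH0 : ∀ x ∈ S, g x * ENNReal.ofReal (b - x) ≤ H x := by
    intro x hx
    have h1 : g x * ENNReal.ofReal (b - x) = ∫⁻ _ in Ioo x b, g x := by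
      rw [setLIntegral_const, Real.volume_Ioo]
    rw [h1]
    refine setLIntegral_mono hgmeas (fun y hy => ?_)
    exact ENNReal.ofReal_le_ofReal (hmono x hx y (hSup x hx hy) hy.1.le)
  have hIH : ∀ x ∈ S, H x ≤ I := by
    intro x hx
    exact lintegral_mono_set (hSup x hx)
  -- pointwise bound
  have key1 : ∀ x ∈ S, g x * H x ^ (s - 1) ≤ ENNReal.ofReal (f x ^ s * (b - x) ^ (s - 1)) := by
    intro x hx
    rcases (hf0 x).eq_or_lt with hfx0 | hfx0
    · have hgx : g x = 0 := by rw [hg]; simp only; rw [← hfx0, ENNReal.ofReal_zero]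
      rw [hgx, zero_mul]
      exact zero_le
    · have hbx : (0:ℝ) < b - x := sub_pos.2 (hSb x hx)
      have h1 : ENNReal.ofReal (f x * (b - x)) ≤ H x := by
        rw [ENNReal.ofReal_mul (hf0 x)]
        exact hH0 x hx
      have h2 : H x ^ (s - 1) ≤ ENNReal.ofReal (f x * (b - x)) ^ (s - 1) :=
        my_rpow_anti (ENNReal.ofReal_pos.2 (by positivity)) h1 (by linarith)
      calc g x * H x ^ (s - 1) ≤ g x * ENNReal.ofReal (f x * (b - x)) ^ (s - 1) :=
            mul_le_mul_right h2 _
        _ = ENNReal.ofReal (f x * (f x * (b - x)) ^ (s - 1)) := by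
            rw [ENNReal.ofReal_rpow_of_pos (by positivity), ← ENNReal.ofReal_mul (hf0 x)]
        _ = ENNReal.ofReal (f x ^ s * (b - x) ^ (s - 1)) := by
            congr 1
            rw [Real.mul_rpow (hf0 x) hbx.le, ← mul_assoc]
            congr 1
            nth_rewrite 1 [show f x = f x ^ (1:ℝ) by rw [Real.rpow_one]]
            rw [← Real.rpow_add hfx0]
            congr 1
            ring
  -- layer representation
  set F : ℝ → ℝ → ℝ≥0∞ := fun x u =>
    if H x < ENNReal.ofReal u then g x * ENNReal.ofReal ((1 - s) * u ^ (s - 2)) else 0 with hF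
  have hcmeas : Measurable fun u : ℝ => ENNReal.ofReal ((1 - s) * u ^ (s - 2)) :=
    ((measurable_id.pow measurable_const).const_mul (1 - s)).ennreal_ofReal
  have hFmeas : Measurable (Function.uncurry F) := by
    have heq : Function.uncurry F = fun p : ℝ × ℝ =>
        if H p.1 < ENNReal.ofReal p.2 then g p.1 * ENNReal.ofReal ((1 - s) * p.2 ^ (s - 2))
        else 0 := by
      funext p
      rfl
    rw [heq]
    exact Measurable.ite
      (measurableSet_lt (hHmeas.comp measurable_fst) measurable_snd.ennreal_ofReal)
      ((hgmeas.comp measurable_fst).mul (hcmeas.comp measurable_snd)) measurable_const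
  have key2 : ∀ x, g x * H x ^ (s - 1) = ∫⁻ u in Ioi (0:ℝ), F x u := by
    intro x
    have hc0 : (0:ℝ) ≤ (H x).toReal := ENNReal.toReal_nonneg
    have hTmeas : MeasurableSet {u : ℝ | H x < ENNReal.ofReal u} :=
      measurable_id.ennreal_ofReal measurableSet_Ioi
    have hset : {u : ℝ | H x < ENNReal.ofReal u} ∩ Ioi (0:ℝ) = Ioi ((H x).toReal) := by
      ext u
      simp only [mem_inter_iff, mem_Ioi, mem_setOf_eq]
      constructor
      · rintro ⟨hu, _⟩
        exact (ENNReal.lt_ofReal_iff_toReal_lt (hHtop x)).1 hu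
      · intro hu
        exact ⟨(ENNReal.lt_ofReal_iff_toReal_lt (hHtop x)).2 hu, lt_of_le_of_lt hc0 hu⟩
    calc g x * H x ^ (s - 1)
        = g x * (ENNReal.ofReal ((H x).toReal)) ^ (s - 1) := by
          rw [ENNReal.ofReal_toReal (hHtop x)]
      _ = g x * ∫⁻ u in Ioi ((H x).toReal), ENNReal.ofReal ((1 - s) * u ^ (s - 2)) := by
          rw [my_tail s hs0 hs1 hc0]
      _ = ∫⁻ u in Ioi ((H x).toReal), g x * ENNReal.ofReal ((1 - s) * u ^ (s - 2)) :=
          (lintegral_const_mul _ hcmeas).symm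
      _ = ∫⁻ u in {u : ℝ | H x < ENNReal.ofReal u} ∩ Ioi (0:ℝ),
            g x * ENNReal.ofReal ((1 - s) * u ^ (s - 2)) := by rw [hset]
      _ = ∫⁻ u in Ioi (0:ℝ), F x u := by
          rw [← Measure.restrict_restrict hTmeas, ← lintegral_indicator hTmeas]
          refine lintegral_congr (fun u => ?_)
          rw [Set.indicator_apply]
          rfl
  have key3 : ∀ u : ℝ, 0 < u →
      ENNReal.ofReal ((1 - s) * u ^ (s - 2)) * min (ENNReal.ofReal u) I ≤ ∫⁻ x in S, F x u := by
    intro u hu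
    set U : ℝ≥0∞ := ENNReal.ofReal u with hU
    set c : ℝ≥0∞ := ENNReal.ofReal ((1 - s) * u ^ (s - 2)) with hc
    have hTmeas : MeasurableSet {x : ℝ | H x < U} := hHmeas measurableSet_Iio
    have hind : ∫⁻ x in S, F x u = (∫⁻ x in {x : ℝ | H x < U} ∩ S, g x) * c := by
      calc ∫⁻ x in S, F x u
          = ∫⁻ x in S, {x : ℝ | H x < U}.indicator (fun x => g x * c) x := by
            refine lintegral_congr (fun x => ?_)
            rw [Set.indicator_apply]
            rfl
        _ = ∫⁻ x in {x : ℝ | H x < U} ∩ S, g x * c := by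
            rw [lintegral_indicator hTmeas, Measure.restrict_restrict hTmeas]
        _ = _ := lintegral_mul_const _ hgmeas
    rw [hind, mul_comm c]
    refine mul_le_mul_left ?_ c
    -- show min U I ≤ ∫⁻ x in {x | H x < U} ∩ S, g x
    by_cases hall : ∀ x ∈ S, H x < U
    · have hSeq : {x : ℝ | H x < U} ∩ S = S := Set.inter_eq_right.2 (fun x hx => hall x hx)
      rw [hSeq]
      exact min_le_right _ _
    · push_neg at hall
      obtain ⟨x0, hx0S, hx0⟩ := hall
      set A : Set ℝ := {x | x ∈ S ∧ U ≤ H x} with hA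
      have hAne : A.Nonempty := ⟨x0, hx0S, hx0⟩
      have hAbdd : BddAbove A := ⟨b, fun x hx => (hSb x hx.1).le⟩
      set e : ℝ := sSup A with he
      have hx0e : x0 ≤ e := le_csSup hAbdd ⟨hx0S, hx0⟩
      have hbx0 : (0:ℝ) < b - x0 := sub_pos.2 (hSb x0 hx0S)
      set δ : ℝ := min (u / (2 * (n + 1))) ((b - x0) / 2) with hδ
      have hδpos : 0 < δ := lt_min (by positivity) (by linarith)
      set y : ℝ := b - δ with hy
      have hyb : y < b := by rw [hy]; linarith
      have hx0y : x0 < y := by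
        have h2 : δ ≤ (b - x0) / 2 := min_le_right _ _
        rw [hy]; linarith
      have hyS : y ∈ S := hSup x0 hx0S ⟨hx0y, hyb⟩
      have hHy : H y < U := by
        refine lt_of_le_of_lt (hHle y) ?_
        rw [← ENNReal.ofReal_mul hn, hU]
        refine (ENNReal.ofReal_lt_ofReal_iff hu).2 ?_
        have h1 : b - y = δ := by rw [hy]; ring
        have h2 : δ ≤ u / (2 * (n + 1)) := min_le_left _ _
        have h3 : n * (b - y) ≤ n * (u / (2 * (n + 1))) := by
          rw [h1]; exact mul_le_mul_of_nonneg_left h2 hn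
        have h4 : n * (u / (2 * (n + 1))) < u := by
          rw [mul_comm, div_mul_eq_mul_div, div_lt_iff₀ (by positivity : (0:ℝ) < 2 * (n + 1))]
          nlinarith
        exact lt_of_le_of_lt h3 h4
      have hey : e ≤ y := by
        refine csSup_le hAne (fun x hx => ?_)
        by_contra hxy
        push_neg at hxy
        exact absurd (lt_of_le_of_lt (hHanti hxy.le) hHy) (not_lt.2 hx.2)
      have heS : e ∈ S := by
        rcases eq_or_lt_of_le hx0e with h | h
        · rw [← h]; exact hx0S
        · exact hSup x0 hx0S ⟨h, lt_of_le_of_lt hey hyb⟩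
      have heb : e < b := hSb e heS
      have hHe : U ≤ H e := by
        refine ENNReal.le_of_forall_pos_le_add (fun ε hε _ => ?_)
        set δ' : ℝ := (ε : ℝ) / (n + 1) with hδ'
        have hε' : (0:ℝ) < ε := hε
        have hδ'pos : 0 < δ' := by positivity
        obtain ⟨x, hxA, hxe⟩ := exists_lt_of_lt_csSup hAne (by linarith : e - δ' < e)
        have hxle : x ≤ e := le_csSup hAbdd hxA
        calc U ≤ H x := hxA.2
          _ ≤ ENNReal.ofReal n * ENNReal.ofReal (e - x) + H e := hsplit x e hxle heb
          _ ≤ (ε : ℝ≥0∞) + H e := by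
              refine add_le_add ?_ (le_refl _)
              rw [← ENNReal.ofReal_mul hn]
              have h5 : n * (e - x) ≤ (ε : ℝ) := by
                have h6 : e - x ≤ δ' := by linarith
                have h7 : n * (e - x) ≤ n * δ' := mul_le_mul_of_nonneg_left h6 hn
                have h8 : n * δ' ≤ (ε : ℝ) := by
                  rw [hδ', mul_comm, div_mul_eq_mul_div, div_le_iff₀ (by positivity : (0:ℝ) < n + 1)]
                  nlinarith
                linarith
              calc ENNReal.ofReal (n * (e - x)) ≤ ENNReal.ofReal (ε : ℝ) :=
                    ENNReal.ofReal_le_ofReal h5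
                _ = (ε : ℝ≥0∞) := ENNReal.ofReal_coe_nnreal
          _ = H e + (ε : ℝ≥0∞) := add_comm _ _
      have hsub : Ioo e b ⊆ {x : ℝ | H x < U} ∩ S := by
        intro x hx
        refine ⟨?_, hSup e heS hx⟩
        by_contra hxU
        rw [mem_setOf_eq, not_lt] at hxU
        exact absurd (le_csSup hAbdd ⟨hSup e heS hx, hxU⟩) (not_le.2 hx.1)
      calc min U I ≤ U := min_le_left _ _
        _ ≤ H e := hHe
        _ ≤ _ := lintegral_mono_set hsub
  -- assembly
  set K : ℝ≥0∞ := ∫⁻ x in S, g x * H x ^ (s - 1) with hK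
  have step1 : K ≤ J := by
    refine setLIntegral_mono ((hf.pow measurable_const).mul
      ((measurable_const.sub measurable_id).pow measurable_const)).ennreal_ofReal key1
  have step2 : ∫⁻ u in Ioi (0:ℝ),
      ENNReal.ofReal ((1 - s) * u ^ (s - 2)) * min (ENNReal.ofReal u) I ≤ K := by
    have hswap : ∫⁻ x in S, ∫⁻ u in Ioi (0:ℝ), F x u = ∫⁻ u in Ioi (0:ℝ), ∫⁻ x in S, F x u :=
      lintegral_lintegral_swap hFmeas.aemeasurable
    have hKeq : K = ∫⁻ u in Ioi (0:ℝ), ∫⁻ x in S, F x u := by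
      rw [hK, ← hswap]
      exact lintegral_congr (fun x => key2 x)
    rw [hKeq]
    refine setLIntegral_mono ?_ key3
    have hswapF : Measurable (Function.uncurry fun u x => F x u) := by
      have heq : (Function.uncurry fun (u x : ℝ) => F x u) = Function.uncurry F ∘ Prod.swap := by
        funext p
        rfl
      rw [heq]
      exact hFmeas.comp measurable_swap
    exact Measurable.lintegral_prod_right (f := fun u x => F x u) hswapF
  calc I ^ s ≤ ENNReal.ofReal s * ∫⁻ u in Ioi (0:ℝ),
        ENNReal.ofReal ((1 - s) * u ^ (s - 2)) * min (ENNReal.ofReal u) I := my_oned s hs0 hs1 I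
    _ ≤ ENNReal.ofReal s * K := mul_le_mul_right step2 _
    _ ≤ ENNReal.ofReal s * J := mul_le_mul_right step1 _

/-- Lemma 3: for `0 < s < 1`, `-∞ ≤ a < b < ∞` and `f` nonnegative and
nondecreasing on `(a,b)`, `(∫_a^b f)^s ≤ s ∫_a^b f(x)^s (b-x)^{s-1} dx`,
both sides interpreted in `[0,∞]`. -/
theorem integral_pow_le_increasing
    (s : ℝ) (hs0 : 0 < s) (hs1 : s < 1) (a : EReal) (b : ℝ) (hab : a < (b : EReal))
    (f : ℝ → ℝ) (hf : Measurable f)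
    (hpos : ∀ x : ℝ, a < (x : EReal) → x < b → 0 ≤ f x)
    (hinc : ∀ x y : ℝ, a < (x : EReal) → x ≤ y → y < b → f x ≤ f y) :
    (∫⁻ x in {x : ℝ | a < (x : EReal) ∧ x < b}, ENNReal.ofReal (f x)) ^ s ≤
      ENNReal.ofReal s *
        ∫⁻ x in {x : ℝ | a < (x : EReal) ∧ x < b},
          ENNReal.ofReal (f x ^ s * (b - x) ^ (s - 1)) := by
  set S : Set ℝ := {x : ℝ | a < (x : EReal) ∧ x < b} with hS
  have hSm : MeasurableSet S := by
    have hSeq : S = ((fun x : ℝ => (x : EReal)) ⁻¹' Ioi a) ∩ Iio b := rfl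
    rw [hSeq]
    exact (measurable_coe_real_ereal measurableSet_Ioi).inter measurableSet_Iio
  have hSb : ∀ x ∈ S, x < b := fun x hx => hx.2
  have hSup : ∀ x ∈ S, Ioo x b ⊆ S := fun x hx y hy =>
    ⟨lt_trans hx.1 (by exact_mod_cast hy.1), hy.2⟩
  set fn : ℕ → ℝ → ℝ := fun n x => min (max (f x) 0) n with hfndef
  have hfnmeas : ∀ n, Measurable (fn n) := fun n => (hf.max measurable_const).min measurable_const
  have hfn0 : ∀ n x, 0 ≤ fn n x := fun n x => le_min (le_max_right _ _) (Nat.cast_nonneg n)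
  have hfnn : ∀ n x, fn n x ≤ (n : ℝ) := fun n x => min_le_right _ _
  have hfnx : ∀ n x, fn n x ≤ max (f x) 0 := fun n x => min_le_left _ _
  have hmono : ∀ n : ℕ, ∀ x ∈ S, ∀ y ∈ S, x ≤ y → fn n x ≤ fn n y := fun n x hx y hy hxy =>
    min_le_min (max_le_max (hinc x y hx.1 hxy hy.2) le_rfl) le_rfl
  have hbnd : ∀ m : ℕ, (∫⁻ x in S, ENNReal.ofReal (fn m x)) ^ s ≤
      ENNReal.ofReal s * ∫⁻ x in S, ENNReal.ofReal (fn m x ^ s * (b - x) ^ (s - 1)) :=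
    fun m => my_bounded s hs0 hs1 b S hSm hSb hSup (fn m) (hfnmeas m) m (hfn0 m) (hfnn m)
      (hmono m)
  have hImono : Monotone fun m : ℕ => fun x => ENNReal.ofReal (fn m x) := by
    intro m k hmk
    intro x
    exact ENNReal.ofReal_le_ofReal (min_le_min le_rfl (Nat.cast_le.2 hmk))
  have hIsup : ∫⁻ x in S, ENNReal.ofReal (f x) = ⨆ m, ∫⁻ x in S, ENNReal.ofReal (fn m x) := by
    rw [← lintegral_iSup (fun m => (hfnmeas m).ennreal_ofReal) hImono]
    refine setLIntegral_congr_fun hSm (fun x hx => ?_)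
    have hfx : max (f x) 0 = f x := max_eq_left (hpos x hx.1 hx.2)
    apply le_antisymm
    · obtain ⟨m, hm⟩ := exists_nat_ge (f x)
      refine le_trans (le_of_eq ?_) (le_iSup (fun m => ENNReal.ofReal (fn m x)) m)
      have h1 : fn m x = f x := by
        show min (max (f x) 0) (m : ℝ) = f x
        rw [hfx, min_eq_left hm]
      rw [h1]
    · exact iSup_le (fun m => ENNReal.ofReal_le_ofReal (le_trans (hfnx m x) (le_of_eq hfx)))
  have hJmono : Monotone fun m : ℕ =>
      fun x => ENNReal.ofReal (fn m x ^ s * (b - x) ^ (s - 1)) := by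
    intro m k hmk
    intro x
    dsimp only
    rcases le_or_gt 0 ((b - x) ^ (s - 1)) with hw | hw
    · refine ENNReal.ofReal_le_ofReal (mul_le_mul_of_nonneg_right ?_ hw)
      exact Real.rpow_le_rpow (hfn0 m x) (min_le_min le_rfl (Nat.cast_le.2 hmk)) hs0.le
    · rw [ENNReal.ofReal_of_nonpos (mul_nonpos_of_nonneg_of_nonpos (Real.rpow_nonneg (hfn0 m x) s) hw.le),
        ENNReal.ofReal_of_nonpos (mul_nonpos_of_nonneg_of_nonpos (Real.rpow_nonneg (hfn0 k x) s) hw.le)]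
  have hJsup : ∫⁻ x in S, ENNReal.ofReal (f x ^ s * (b - x) ^ (s - 1))
      = ⨆ m, ∫⁻ x in S, ENNReal.ofReal (fn m x ^ s * (b - x) ^ (s - 1)) := by
    rw [← lintegral_iSup (f := fun m x => ENNReal.ofReal (fn m x ^ s * (b - x) ^ (s - 1))) (fun m => (((hfnmeas m).pow measurable_const).mul
      ((measurable_const.sub measurable_id').pow measurable_const)).ennreal_ofReal) hJmono]
    refine setLIntegral_congr_fun hSm (fun x hx => ?_)
    have hbx : (0:ℝ) < b - x := sub_pos.2 hx.2
    have hw : 0 ≤ (b - x) ^ (s - 1) := Real.rpow_nonneg hbx.le _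
    have hfx : max (f x) 0 = f x := max_eq_left (hpos x hx.1 hx.2)
    apply le_antisymm
    · obtain ⟨m, hm⟩ := exists_nat_ge (f x)
      refine le_trans (le_of_eq ?_)
        (le_iSup (fun m => ENNReal.ofReal (fn m x ^ s * (b - x) ^ (s - 1))) m)
      have h1 : fn m x = f x := by
        show min (max (f x) 0) (m : ℝ) = f x
        rw [hfx, min_eq_left hm]
      rw [h1]
    · refine iSup_le (fun m => ENNReal.ofReal_le_ofReal (mul_le_mul_of_nonneg_right ?_ hw))
      exact Real.rpow_le_rpow (hfn0 m x) (le_trans (hfnx m x) (le_of_eq hfx)) hs0.le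
  rw [hIsup, hJsup]
  have hrpow : (⨆ m, ∫⁻ x in S, ENNReal.ofReal (fn m x)) ^ s
      = ⨆ m, (∫⁻ x in S, ENNReal.ofReal (fn m x)) ^ s := by
    have h2 := OrderIso.map_iSup (ENNReal.orderIsoRpow s hs0)
      (fun m : ℕ => ∫⁻ x in S, ENNReal.ofReal (fn m x))
    simp only [ENNReal.orderIsoRpow_apply] at h2
    exact h2
  rw [hrpow]
  calc (⨆ m, (∫⁻ x in S, ENNReal.ofReal (fn m x)) ^ s)
      ≤ ⨆ m, ENNReal.ofReal s * ∫⁻ x in S, ENNReal.ofReal (fn m x ^ s * (b - x) ^ (s - 1)) :=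
        iSup_mono hbnd
    _ = ENNReal.ofReal s * ⨆ m, ∫⁻ x in S, ENNReal.ofReal (fn m x ^ s * (b - x) ^ (s - 1)) :=
        (ENNReal.mul_iSup _ _).symm
end
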